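/- arXiv:1503.00462 — 3 statements merged into one kernel-verified Lean document; each statement's English description precedes it below -/
import Mathlib

section
/- Let R be a right Noetherian ring and A the largest right ideal of R with |A|_r < |R|_r (which exists and is a two-sided ideal). Then |R/A|_r = |R|_r and the quotient ring R/A is right Krull-homogeneous, i.e., every nonzero right ideal of R/A has Krull dimension equal to |R/A|_r. -/
universe u

/-- `DevLE α o`: the Gabriel–Rentschler deviation of the preorder `α` is at most `o`. -/
def DevLE (α : Type u) [Preorder α] (o : Ordinal.{u}) : Prop :=
  ∀ f : ℕ → α, (∀ n, f (n + 1) ≤ f n) →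
    ∃ N : ℕ, ∀ n, N ≤ n →
      f n ≤ f (n + 1) ∨
        ∃ o' : {x : Ordinal.{u} // x < o},
          DevLE {y : α // f (n + 1) ≤ y ∧ y ≤ f n} o'.1
termination_by o
decreasing_by exact o'.2

/-- The deviation (Krull dimension) of a preorder, as the least ordinal bound. -/
noncomputable def dev (α : Type u) [Preorder α] : Ordinal.{u} := sInf {o | DevLE α o}

/-- The left Krull dimension of a ring: deviation of the lattice of left ideals. -/
noncomputable def lKdim (R : Type u) [Ring R] : Ordinal.{u} := dev (Submodule R R)

/-- The right Krull dimension of a ring: deviation of the lattice of right ideals. -/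
noncomputable def rKdim (R : Type u) [Ring R] : Ordinal.{u} := dev (Submodule Rᵐᵒᵖ R)

/-- Krull dimension of a right ideal `J` as a right module: deviation of `[⊥, J]`. -/
noncomputable def rIdealDim (R : Type u) [Ring R] (J : Submodule Rᵐᵒᵖ R) : Ordinal.{u} :=
  dev {I : Submodule Rᵐᵒᵖ R // I ≤ J}

/-- Krull dimension of a left ideal `J` as a left module. -/
noncomputable def lIdealDim (R : Type u) [Ring R] (J : Submodule R R) : Ordinal.{u} :=
  dev {I : Submodule R R // I ≤ J}

/-- A ring is right Krull homogeneous if every nonzero right ideal has full dimension. -/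
def RightKH (R : Type u) [Ring R] : Prop :=
  ∀ J : Submodule Rᵐᵒᵖ R, J ≠ ⊥ → rIdealDim R J = rKdim R

def LeftKH (R : Type u) [Ring R] : Prop :=
  ∀ J : Submodule R R, J ≠ ⊥ → lIdealDim R J = lKdim R

/-- A two-sided ideal is prime if it is proper and `aRb ⊆ P` implies `a ∈ P` or `b ∈ P`. -/
def IsPrimeT {R : Type u} [Ring R] (P : TwoSidedIdeal R) : Prop :=
  (P : Set R) ≠ Set.univ ∧ ∀ a b : R, (∀ r : R, a * r * b ∈ P) → a ∈ P ∨ b ∈ P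

/-- Right Krull dimension of the quotient ring `R/I`. -/
noncomputable def rKdimQ {R : Type u} [Ring R] (I : TwoSidedIdeal R) : Ordinal.{u} :=
  rKdim I.ringCon.Quotient

noncomputable def lKdimQ {R : Type u} [Ring R] (I : TwoSidedIdeal R) : Ordinal.{u} :=
  lKdim I.ringCon.Quotient

/-- `Λ(R)`: primes with full right Krull dimension. -/
def Lam (R : Type u) [Ring R] : Set (TwoSidedIdeal R) :=
  {P | IsPrimeT P ∧ rKdimQ P = rKdim R}

/-- `Λ'(R)`: primes with full left Krull dimension. -/
def Lam' (R : Type u) [Ring R] : Set (TwoSidedIdeal R) :=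
  {P | IsPrimeT P ∧ lKdimQ P = lKdim R}

/-- A two-sided ideal viewed as a right ideal. -/
def rightIdealOf {R : Type u} [Ring R] (I : TwoSidedIdeal R) : Submodule Rᵐᵒᵖ R where
  carrier := I
  zero_mem' := I.zero_mem
  add_mem' := I.add_mem
  smul_mem' := fun r x hx => I.mul_mem_right x r.unop hx

/-- A two-sided ideal viewed as a left ideal. -/
def leftIdealOf {R : Type u} [Ring R] (I : TwoSidedIdeal R) : Submodule R R where
  carrier := I
  zero_mem' := I.zero_mem
  add_mem' := I.add_mem
  smul_mem' := fun r x hx => I.mul_mem_left r x hx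

/-- The right annihilator of a set, as a right ideal. -/
def rAnnIdeal (R : Type u) [Ring R] (S : Set R) : Submodule Rᵐᵒᵖ R where
  carrier := {x | ∀ y ∈ S, y * x = 0}
  zero_mem' := by intro y _; simp
  add_mem' := by intro a b ha hb y hy; rw [mul_add, ha y hy, hb y hy, add_zero]
  smul_mem' := by
    intro r x hx y hy
    show y * (x * r.unop) = 0
    rw [← mul_assoc, hx y hy, zero_mul]

/-- The left annihilator of a set. -/
def lAnnSet (R : Type u) [Ring R] (S : Set R) : Set R := {x | ∀ y ∈ S, x * y = 0}


theorem devle_mono {α : Type u} [Preorder α] {o o' : Ordinal.{u}} (h : DevLE α o)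
    (hoo : o ≤ o') : DevLE α o' := by
  rw [DevLE] at h ⊢
  intro f hf
  obtain ⟨N, hN⟩ := h f hf
  refine ⟨N, fun n hn => ?_⟩
  rcases hN n hn with h1 | ⟨⟨x, hx⟩, hd⟩
  · exact Or.inl h1
  · exact Or.inr ⟨⟨x, lt_of_lt_of_le hx hoo⟩, hd⟩

theorem devle_trivial {α : Type u} [Preorder α] (h : ∀ x y : α, x ≤ y) (o : Ordinal.{u}) :
    DevLE α o := by
  rw [DevLE]; intro f _; exact ⟨0, fun n _ => Or.inl (h _ _)⟩

theorem devle_map (o : Ordinal.{u}) : ∀ {α β : Type u} [Preorder α] [Preorder β] (g : α → β),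
    (∀ x y : α, x ≤ y ↔ g x ≤ g y) → DevLE β o → DevLE α o := by
  induction o using Ordinal.induction with
  | _ o IH =>
    intro α β _ _ g hg hβ
    rw [DevLE] at hβ ⊢
    intro f hf
    obtain ⟨N, hN⟩ := hβ (fun n => g (f n)) (fun n => (hg _ _).1 (hf n))
    refine ⟨N, fun n hn => ?_⟩
    rcases hN n hn with h1 | ⟨⟨x, hx⟩, hd⟩
    · exact Or.inl ((hg _ _).2 h1)
    · refine Or.inr ⟨⟨x, hx⟩, ?_⟩
      exact IH x hx
        (fun y : {y : α // f (n+1) ≤ y ∧ y ≤ f n} =>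
          (⟨g y.1, (hg _ _).1 y.2.1, (hg _ _).1 y.2.2⟩ :
            {z : β // g (f (n+1)) ≤ z ∧ z ≤ g (f n)}))
        (fun y z => hg y.1 z.1) hd

theorem devle_splitIcc (o : Ordinal.{u}) :
    ∀ {L : Type u} [Lattice L] [IsModularLattice L] (a lo hi : L),
    DevLE {x : L // lo ⊓ a ≤ x ∧ x ≤ hi ⊓ a} o →
    DevLE {x : L // lo ⊔ a ≤ x ∧ x ≤ hi ⊔ a} o →
    DevLE {x : L // lo ≤ x ∧ x ≤ hi} o := by
  induction o using Ordinal.induction with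
  | _ o IH =>
    intro L _ _ a lo hi hinf hsup
    rw [DevLE] at hinf hsup ⊢
    intro f hf
    obtain ⟨N1, hN1⟩ := hinf
      (fun n => ⟨(f n).1 ⊓ a, inf_le_inf_right a (f n).2.1, inf_le_inf_right a (f n).2.2⟩)
      (fun n => inf_le_inf_right a (hf n))
    obtain ⟨N2, hN2⟩ := hsup
      (fun n => ⟨(f n).1 ⊔ a, sup_le_sup_right (f n).2.1 a, sup_le_sup_right (f n).2.2 a⟩)
      (fun n => sup_le_sup_right (hf n) a)
    refine ⟨max N1 N2, fun n hn => ?_⟩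
    have key : ∀ o1 o2 : Ordinal.{u}, o1 < o → o2 < o →
        DevLE {x : L // (f (n+1)).1 ⊓ a ≤ x ∧ x ≤ (f n).1 ⊓ a} o1 →
        DevLE {x : L // (f (n+1)).1 ⊔ a ≤ x ∧ x ≤ (f n).1 ⊔ a} o2 →
        f n ≤ f (n + 1) ∨
          ∃ o' : {x : Ordinal.{u} // x < o},
            DevLE {y : {x : L // lo ≤ x ∧ x ≤ hi} // f (n + 1) ≤ y ∧ y ≤ f n} o'.1 := by
      intro o1 o2 ho1 ho2 h1 h2
      refine Or.inr ⟨⟨max o1 o2, max_lt ho1 ho2⟩, ?_⟩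
      have hflat : DevLE {x : L // (f (n+1)).1 ≤ x ∧ x ≤ (f n).1} (max o1 o2) :=
        IH (max o1 o2) (max_lt ho1 ho2) a (f (n+1)).1 (f n).1
          (devle_mono h1 (le_max_left _ _)) (devle_mono h2 (le_max_right _ _))
      exact devle_map _
        (fun y : {y : {x : L // lo ≤ x ∧ x ≤ hi} // f (n + 1) ≤ y ∧ y ≤ f n} =>
          (⟨y.1.1, y.2.1, y.2.2⟩ : {x : L // (f (n+1)).1 ≤ x ∧ x ≤ (f n).1}))
        (fun _ _ => Iff.rfl) hflat
    rcases hN1 n (le_trans (le_max_left _ _) hn) with hA | ⟨⟨o1, ho1⟩, hd1⟩ <;>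
      rcases hN2 n (le_trans (le_max_right _ _) hn) with hB | ⟨⟨o2, ho2⟩, hd2⟩
    · have hA' : (f n).1 ⊓ a ≤ (f (n+1)).1 ⊓ a := hA
      have hB' : (f n).1 ⊔ a ≤ (f (n+1)).1 ⊔ a := hB
      exact Or.inl (show (f n).1 ≤ (f (n+1)).1 from le_of_eq
        (eq_of_le_of_inf_le_of_sup_le (show (f (n+1)).1 ≤ (f n).1 from hf n) hA' hB').symm)
    · have hA' : (f n).1 ⊓ a ≤ (f (n+1)).1 ⊓ a := hA
      have h1 : DevLE {x : L // (f (n+1)).1 ⊓ a ≤ x ∧ x ≤ (f n).1 ⊓ a} o2 :=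
        devle_trivial (α := {x : L // (f (n+1)).1 ⊓ a ≤ x ∧ x ≤ (f n).1 ⊓ a})
          (fun x y => show x.1 ≤ y.1 from le_trans x.2.2 (le_trans hA' y.2.1)) o2
      have h2 : DevLE {x : L // (f (n+1)).1 ⊔ a ≤ x ∧ x ≤ (f n).1 ⊔ a} o2 :=
        devle_map _
          (fun x : {x : L // (f (n+1)).1 ⊔ a ≤ x ∧ x ≤ (f n).1 ⊔ a} =>
            ⟨⟨x.1, le_trans (sup_le_sup_right (f (n+1)).2.1 a) x.2.1,
                le_trans x.2.2 (sup_le_sup_right (f n).2.2 a)⟩, x.2.1, x.2.2⟩)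
          (fun _ _ => Iff.rfl) hd2
      exact key o2 o2 ho2 ho2 h1 h2
    · have hB' : (f n).1 ⊔ a ≤ (f (n+1)).1 ⊔ a := hB
      have h1 : DevLE {x : L // (f (n+1)).1 ⊓ a ≤ x ∧ x ≤ (f n).1 ⊓ a} o1 :=
        devle_map _
          (fun x : {x : L // (f (n+1)).1 ⊓ a ≤ x ∧ x ≤ (f n).1 ⊓ a} =>
            ⟨⟨x.1, le_trans (inf_le_inf_right a (f (n+1)).2.1) x.2.1,
                le_trans x.2.2 (inf_le_inf_right a (f n).2.2)⟩, x.2.1, x.2.2⟩)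
          (fun _ _ => Iff.rfl) hd1
      have h2 : DevLE {x : L // (f (n+1)).1 ⊔ a ≤ x ∧ x ≤ (f n).1 ⊔ a} o1 :=
        devle_trivial (α := {x : L // (f (n+1)).1 ⊔ a ≤ x ∧ x ≤ (f n).1 ⊔ a})
          (fun x y => show x.1 ≤ y.1 from le_trans x.2.2 (le_trans hB' y.2.1)) o1
      exact key o1 o1 ho1 ho1 h1 h2
    · have h1 : DevLE {x : L // (f (n+1)).1 ⊓ a ≤ x ∧ x ≤ (f n).1 ⊓ a} o1 :=
        devle_map _
          (fun x : {x : L // (f (n+1)).1 ⊓ a ≤ x ∧ x ≤ (f n).1 ⊓ a} =>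
            ⟨⟨x.1, le_trans (inf_le_inf_right a (f (n+1)).2.1) x.2.1,
                le_trans x.2.2 (inf_le_inf_right a (f n).2.2)⟩, x.2.1, x.2.2⟩)
          (fun _ _ => Iff.rfl) hd1
      have h2 : DevLE {x : L // (f (n+1)).1 ⊔ a ≤ x ∧ x ≤ (f n).1 ⊔ a} o2 :=
        devle_map _
          (fun x : {x : L // (f (n+1)).1 ⊔ a ≤ x ∧ x ≤ (f n).1 ⊔ a} =>
            ⟨⟨x.1, le_trans (sup_le_sup_right (f (n+1)).2.1 a) x.2.1,
                le_trans x.2.2 (sup_le_sup_right (f n).2.2 a)⟩, x.2.1, x.2.2⟩)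
          (fun _ _ => Iff.rfl) hd2
      exact key o1 o2 ho1 ho2 h1 h2

theorem devle_split {L : Type u} [CompleteLattice L] [IsModularLattice L] (a hi : L)
    (ha : a ≤ hi) {o1 o2 : Ordinal.{u}}
    (hbot : DevLE {x : L // x ≤ a} o1) (htop : DevLE {x : L // a ≤ x ∧ x ≤ hi} o2) :
    DevLE {x : L // x ≤ hi} (max o1 o2) := by
  have h1 : DevLE {x : L // ⊥ ⊓ a ≤ x ∧ x ≤ hi ⊓ a} (max o1 o2) :=
    devle_map _ (fun x : {x : L // ⊥ ⊓ a ≤ x ∧ x ≤ hi ⊓ a} =>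
        (⟨x.1, le_trans x.2.2 inf_le_right⟩ : {x : L // x ≤ a}))
      (fun _ _ => Iff.rfl) (devle_mono hbot (le_max_left _ _))
  have h2 : DevLE {x : L // ⊥ ⊔ a ≤ x ∧ x ≤ hi ⊔ a} (max o1 o2) :=
    devle_map _ (fun x : {x : L // ⊥ ⊔ a ≤ x ∧ x ≤ hi ⊔ a} =>
        (⟨x.1, le_trans le_sup_right x.2.1, le_trans x.2.2 (sup_le le_rfl ha)⟩ :
          {x : L // a ≤ x ∧ x ≤ hi}))
      (fun _ _ => Iff.rfl) (devle_mono htop (le_max_right _ _))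
  have h3 := devle_splitIcc (max o1 o2) a ⊥ hi h1 h2
  exact devle_map _ (fun x : {x : L // x ≤ hi} =>
      (⟨x.1, bot_le, x.2⟩ : {x : L // ⊥ ≤ x ∧ x ≤ hi}))
    (fun _ _ => Iff.rfl) h3

theorem dev_congr {α β : Type u} [Preorder α] [Preorder β] (g : α → β)
    (hg : ∀ x y, x ≤ y ↔ g x ≤ g y) (h : β → α) (hh : ∀ x y, x ≤ y ↔ h x ≤ h y) :
    dev α = dev β := by
  unfold dev
  congr 1
  ext o
  exact ⟨fun ho => devle_map o h hh ho, fun ho => devle_map o g hg ho⟩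

lemma qcoe_surj {R : Type u} [Ring R] (A : TwoSidedIdeal R)
    (q : A.ringCon.Quotient) : ∃ s : R, (s : A.ringCon.Quotient) = q :=
  Quotient.inductionOn' q fun s => ⟨s, rfl⟩

lemma coe_eq_zero_iff {R : Type u} [Ring R] (A : TwoSidedIdeal R) (x : R) :
    (x : A.ringCon.Quotient) = 0 ↔ x ∈ A := by
  rw [← RingCon.coe_zero, RingCon.eq, A.rel_iff, sub_zero]

def qComapS {R : Type u} [Ring R] (A : TwoSidedIdeal R)
    (J : Submodule A.ringCon.Quotientᵐᵒᵖ A.ringCon.Quotient) : Submodule Rᵐᵒᵖ R where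
  carrier := {x : R | (x : A.ringCon.Quotient) ∈ J}
  zero_mem' := by show ((0 : R) : A.ringCon.Quotient) ∈ J; rw [RingCon.coe_zero]; exact J.zero_mem
  add_mem' := by
    intro x y hx hy
    show ((x + y : R) : A.ringCon.Quotient) ∈ J
    rw [RingCon.coe_add]
    exact J.add_mem hx hy
  smul_mem' := by
    intro r x hx
    show ((x * r.unop : R) : A.ringCon.Quotient) ∈ J
    rw [RingCon.coe_mul]
    exact J.smul_mem (MulOpposite.op ((r.unop : R) : A.ringCon.Quotient)) hx

def qMapS {R : Type u} [Ring R] (A : TwoSidedIdeal R) (I : Submodule Rᵐᵒᵖ R) :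
    Submodule A.ringCon.Quotientᵐᵒᵖ A.ringCon.Quotient where
  carrier := (fun x : R => (x : A.ringCon.Quotient)) '' I
  zero_mem' := ⟨0, I.zero_mem, RingCon.coe_zero _⟩
  add_mem' := by
    rintro _ _ ⟨x, hx, rfl⟩ ⟨y, hy, rfl⟩
    exact ⟨x + y, I.add_mem hx hy, RingCon.coe_add _ _ _⟩
  smul_mem' := by
    rintro r _ ⟨x, hx, rfl⟩
    obtain ⟨s, hs⟩ := qcoe_surj A r.unop
    refine ⟨x * s, I.smul_mem (MulOpposite.op s) hx, ?_⟩
    show ((x * s : R) : A.ringCon.Quotient) = r • (x : A.ringCon.Quotient)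
    rw [RingCon.coe_mul, hs, MulOpposite.smul_eq_mul_unop]

lemma qComapS_le_iff {R : Type u} [Ring R] (A : TwoSidedIdeal R)
    {J J' : Submodule A.ringCon.Quotientᵐᵒᵖ A.ringCon.Quotient} :
    J ≤ J' ↔ qComapS A J ≤ qComapS A J' := by
  constructor
  · intro h x hx
    exact h hx
  · intro h q hq
    obtain ⟨s, rfl⟩ := qcoe_surj A q
    exact h (show (s : A.ringCon.Quotient) ∈ J from hq)

lemma a_le_qComapS {R : Type u} [Ring R] (A : TwoSidedIdeal R)
    (J : Submodule A.ringCon.Quotientᵐᵒᵖ A.ringCon.Quotient) :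
    rightIdealOf A ≤ qComapS A J := by
  intro x hx
  show (x : A.ringCon.Quotient) ∈ J
  rw [(coe_eq_zero_iff A x).mpr hx]
  exact J.zero_mem

lemma qMapS_le_iff {R : Type u} [Ring R] (A : TwoSidedIdeal R)
    {I I' : Submodule Rᵐᵒᵖ R} (hI' : rightIdealOf A ≤ I') :
    I ≤ I' ↔ qMapS A I ≤ qMapS A I' := by
  constructor
  · rintro h _ ⟨x, hx, rfl⟩
    exact ⟨x, h hx, rfl⟩
  · intro h x hx
    obtain ⟨y, hy, hyx⟩ := h (⟨x, hx, rfl⟩ : (x : A.ringCon.Quotient) ∈ qMapS A I)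
    have hsub : y - x ∈ A := (A.rel_iff y x).mp ((RingCon.eq _).mp hyx)
    have : y - (y - x) ∈ I' := I'.sub_mem hy (hI' hsub)
    simpa using this

/-- If `A` is the largest right ideal with `|A|_r < |R|_r` (a two-sided
ideal), then `|R/A|_r = |R|_r` and `R/A` is right Krull-homogeneous. -/
theorem stmt2 (R : Type u) [Ring R] [IsNoetherianRing Rᵐᵒᵖ]
    (A : TwoSidedIdeal R)
    (h1 : rIdealDim R (rightIdealOf A) < rKdim R)
    (h2 : ∀ I : Submodule Rᵐᵒᵖ R, rIdealDim R I < rKdim R → I ≤ rightIdealOf A) :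
    rKdimQ A = rKdim R ∧ RightKH A.ringCon.Quotient := by
  classical
  have hpos : 0 < rKdim R := lt_of_le_of_lt zero_le h1
  -- the set of bounds for the full lattice is nonempty
  have hSL : {o : Ordinal.{u} | DevLE (Submodule Rᵐᵒᵖ R) o}.Nonempty := by
    by_contra h
    rw [Set.not_nonempty_iff_eq_empty] at h
    have h0 : rKdim R = 0 := by
      show sInf {o : Ordinal.{u} | DevLE (Submodule Rᵐᵒᵖ R) o} = 0
      rw [h]
      exact dif_neg Set.not_nonempty_empty
    rw [h0] at hpos
    exact lt_irrefl _ hpos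
  have hdevL : DevLE (Submodule Rᵐᵒᵖ R) (rKdim R) := csInf_mem hSL
  -- bottom part
  have hd1L : DevLE {I : Submodule Rᵐᵒᵖ R // I ≤ rightIdealOf A} (rKdim R) :=
    devle_map _ (fun x : {I : Submodule Rᵐᵒᵖ R // I ≤ rightIdealOf A} => x.1)
      (fun _ _ => Iff.rfl) hdevL
  have hd1 : DevLE {I : Submodule Rᵐᵒᵖ R // I ≤ rightIdealOf A}
      (rIdealDim R (rightIdealOf A)) := csInf_mem ⟨rKdim R, hd1L⟩
  -- top part
  have hd2L : DevLE {x : Submodule Rᵐᵒᵖ R // rightIdealOf A ≤ x} (rKdim R) :=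
    devle_map _ (fun x : {x : Submodule Rᵐᵒᵖ R // rightIdealOf A ≤ x} => x.1)
      (fun _ _ => Iff.rfl) hdevL
  set d2 := dev {x : Submodule Rᵐᵒᵖ R // rightIdealOf A ≤ x} with hd2def
  have hd2 : DevLE {x : Submodule Rᵐᵒᵖ R // rightIdealOf A ≤ x} d2 := csInf_mem ⟨rKdim R, hd2L⟩
  have hd2le : d2 ≤ rKdim R := csInf_le' hd2L
  -- `|R/A| = |R|` at the lattice level
  have hIccTop : DevLE {x : Submodule Rᵐᵒᵖ R // rightIdealOf A ≤ x ∧ x ≤ ⊤} d2 :=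
    devle_map _ (fun x : {x : Submodule Rᵐᵒᵖ R // rightIdealOf A ≤ x ∧ x ≤ ⊤} =>
        (⟨x.1, x.2.1⟩ : {x : Submodule Rᵐᵒᵖ R // rightIdealOf A ≤ x}))
      (fun _ _ => Iff.rfl) hd2
  have hsplitTop := devle_split (rightIdealOf A) ⊤ le_top hd1 hIccTop
  have hLmax : DevLE (Submodule Rᵐᵒᵖ R) (max (rIdealDim R (rightIdealOf A)) d2) :=
    devle_map _ (fun x : Submodule Rᵐᵒᵖ R => (⟨x, le_top⟩ : {x : Submodule Rᵐᵒᵖ R // x ≤ ⊤}))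
      (fun _ _ => Iff.rfl) hsplitTop
  have hLle : rKdim R ≤ max (rIdealDim R (rightIdealOf A)) d2 := csInf_le' hLmax
  have hd2eq : d2 = rKdim R := by
    rcases le_or_gt (rKdim R) d2 with h | h
    · exact le_antisymm hd2le h
    · exact absurd hLle (not_le_of_gt (max_lt h1 h))
  -- identification of the quotient lattice with the upper interval
  have hQeq : d2 = rKdim A.ringCon.Quotient := by
    refine dev_congr
      (fun x : {x : Submodule Rᵐᵒᵖ R // rightIdealOf A ≤ x} => qMapS A x.1)
      (fun x y => qMapS_le_iff A y.2)
      (fun J : Submodule A.ringCon.Quotientᵐᵒᵖ A.ringCon.Quotient =>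
        (⟨qComapS A J, a_le_qComapS A J⟩ : {x : Submodule Rᵐᵒᵖ R // rightIdealOf A ≤ x}))
      (fun J J' => qComapS_le_iff A)
  constructor
  · show rKdim A.ringCon.Quotient = rKdim R
    rw [← hQeq, hd2eq]
  · intro J hJ
    set I₀ := qComapS A J with hI₀def
    have hI₀ : rightIdealOf A ≤ I₀ := a_le_qComapS A J
    set dIcc := dev {x : Submodule Rᵐᵒᵖ R // rightIdealOf A ≤ x ∧ x ≤ I₀} with hdIccdef
    have hIccL : DevLE {x : Submodule Rᵐᵒᵖ R // rightIdealOf A ≤ x ∧ x ≤ I₀} (rKdim R) :=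
      devle_map _ (fun x : {x : Submodule Rᵐᵒᵖ R // rightIdealOf A ≤ x ∧ x ≤ I₀} => x.1)
        (fun _ _ => Iff.rfl) hdevL
    have hIccmem : DevLE {x : Submodule Rᵐᵒᵖ R // rightIdealOf A ≤ x ∧ x ≤ I₀} dIcc :=
      csInf_mem ⟨rKdim R, hIccL⟩
    have hIccle : dIcc ≤ rKdim R := csInf_le' hIccL
    have hIcceq : dIcc = rKdim R := by
      refine le_antisymm hIccle (le_of_not_gt fun hlt => ?_)
      have hsplit := devle_split (rightIdealOf A) I₀ hI₀ hd1 hIccmem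
      have hle0 : rIdealDim R I₀ ≤ max (rIdealDim R (rightIdealOf A)) dIcc := csInf_le' hsplit
      have hlt2 : rIdealDim R I₀ < rKdim R := lt_of_le_of_lt hle0 (max_lt h1 hlt)
      have hle := h2 I₀ hlt2
      apply hJ
      rw [Submodule.eq_bot_iff]
      intro q hq
      obtain ⟨s, rfl⟩ := qcoe_surj A q
      have hs : s ∈ A := hle (show (s : A.ringCon.Quotient) ∈ J from hq)
      exact (coe_eq_zero_iff A s).mpr hs
    have hJdev : rIdealDim A.ringCon.Quotient J = dIcc := by
      refine (dev_congr
        (fun x : {x : Submodule Rᵐᵒᵖ R // rightIdealOf A ≤ x ∧ x ≤ I₀} =>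
          (⟨qMapS A x.1, by rintro _ ⟨y, hy, rfl⟩; exact x.2.2 hy⟩ :
            {I : Submodule A.ringCon.Quotientᵐᵒᵖ A.ringCon.Quotient // I ≤ J}))
        (fun x y => qMapS_le_iff A y.2.1)
        (fun K : {I : Submodule A.ringCon.Quotientᵐᵒᵖ A.ringCon.Quotient // I ≤ J} =>
          (⟨qComapS A K.1, a_le_qComapS A K.1, (qComapS_le_iff A).mp K.2⟩ :
            {x : Submodule Rᵐᵒᵖ R // rightIdealOf A ≤ x ∧ x ≤ I₀}))
        (fun K K' => qComapS_le_iff A)).symm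
    show rIdealDim A.ringCon.Quotient J = rKdim A.ringCon.Quotient
    rw [hJdev, hIcceq, ← hd2eq, hQeq]
end

section
/- Let R be a Noetherian ring (left and right Noetherian) that is right Krull-homogeneous, and let B be the largest left ideal of R with |B|_l < |R|_l. Then the quotient ring R/B satisfies |R/B|_r = |R|_r. -/
universe u

namespace KDAux

/-- monotonicity in the ordinal -/
theorem devLE_mono {α : Type u} [Preorder α] {o o₂ : Ordinal.{u}} (h : DevLE α o)
    (ho : o ≤ o₂) : DevLE α o₂ := by
  rw [DevLE] at h ⊢
  intro f hf
  obtain ⟨N, hN⟩ := h f hf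
  refine ⟨N, fun n hn => ?_⟩
  rcases hN n hn with h1 | ⟨o', ho'⟩
  · exact Or.inl h1
  · exact Or.inr ⟨⟨o'.1, lt_of_lt_of_le o'.2 ho⟩, ho'⟩

/-- trivial preorders satisfy any bound -/
theorem devLE_of_trivial {α : Type u} [Preorder α] (h : ∀ x y : α, x ≤ y)
    (o : Ordinal.{u}) : DevLE α o := by
  rw [DevLE]
  intro f _
  exact ⟨0, fun n _ => Or.inl (h _ _)⟩

/-- transfer along a monotone, relatively-reflecting map -/
theorem devLE_transfer {o : Ordinal.{u}} :
    ∀ {α β : Type u} [Preorder α] [Preorder β] (g : β → α), Monotone g →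
    (∀ x y : β, y ≤ x → g x ≤ g y → x ≤ y) → DevLE α o → DevLE β o := by
  induction o using Ordinal.induction with
  | h o IH =>
    intro α β _ _ g hmono hrefl hα
    rw [DevLE] at hα ⊢
    intro f hf
    obtain ⟨N, hN⟩ := hα (fun n => g (f n)) (fun n => hmono (hf n))
    refine ⟨N, fun n hn => ?_⟩
    rcases hN n hn with h1 | ⟨o', ho'⟩
    · exact Or.inl (hrefl (f n) (f (n + 1)) (hf n) h1)
    · refine Or.inr ⟨o', ?_⟩
      refine IH o'.1 o'.2 (β := {y : β // f (n + 1) ≤ y ∧ y ≤ f n})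
        (fun y => ⟨g y.1, hmono y.2.1, hmono y.2.2⟩) (fun a b hab => hmono hab) ?_ ho'
      intro x y hxy hgxy
      exact hrefl x.1 y.1 hxy hgxy

/-- product bound -/
theorem devLE_prod {o : Ordinal.{u}} :
    ∀ {α β : Type u} [Preorder α] [Preorder β],
      DevLE α o → DevLE β o → DevLE (α × β) o := by
  induction o using Ordinal.induction with
  | h o IH =>
    intro α β _ _ hα hβ
    rw [DevLE]
    intro h hh
    rw [DevLE] at hα hβ
    obtain ⟨N₁, hN₁⟩ := hα (fun n => (h n).1) (fun n => (hh n).1)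
    obtain ⟨N₂, hN₂⟩ := hβ (fun n => (h n).2) (fun n => (hh n).2)
    refine ⟨max N₁ N₂, fun n hn => ?_⟩
    have hn₁ := le_trans (le_max_left N₁ N₂) hn
    have hn₂ := le_trans (le_max_right N₁ N₂) hn
    rcases hN₁ n hn₁ with ha | ⟨o₁, ho₁⟩ <;> rcases hN₂ n hn₂ with hb | ⟨o₂, ho₂⟩
    · exact Or.inl ⟨ha, hb⟩
    · -- α stabilizes, β has interval bound o₂
      refine Or.inr ⟨o₂, ?_⟩
      refine devLE_transfer (fun z => (⟨z.1.2, z.2.1.2, z.2.2.2⟩ :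
        {y : β // (h (n+1)).2 ≤ y ∧ y ≤ (h n).2})) (fun a b hab => hab.2) ?_ ho₂
      intro x y hxy h2
      exact ⟨le_trans (le_trans x.2.2.1 ha) y.2.1.1, h2⟩
    · refine Or.inr ⟨o₁, ?_⟩
      refine devLE_transfer (fun z => (⟨z.1.1, z.2.1.1, z.2.2.1⟩ :
        {y : α // (h (n+1)).1 ≤ y ∧ y ≤ (h n).1})) (fun a b hab => hab.1) ?_ ho₁
      intro x y hxy h2
      exact ⟨h2, le_trans (le_trans x.2.2.2 hb) y.2.1.2⟩
    · refine Or.inr ⟨⟨max o₁.1 o₂.1, max_lt o₁.2 o₂.2⟩, ?_⟩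
      have d₁ := devLE_mono ho₁ (le_max_left o₁.1 o₂.1)
      have d₂ := devLE_mono ho₂ (le_max_right o₁.1 o₂.1)
      have dprod := IH _ (max_lt o₁.2 o₂.2) d₁ d₂
      refine devLE_transfer (fun z =>
        ((⟨z.1.1, z.2.1.1, z.2.2.1⟩, ⟨z.1.2, z.2.1.2, z.2.2.2⟩) :
          {y : α // (h (n+1)).1 ≤ y ∧ y ≤ (h n).1} ×
          {y : β // (h (n+1)).2 ≤ y ∧ y ≤ (h n).2}))
        (fun a b hab => Prod.le_def.mpr ⟨Subtype.coe_le_coe.mpr hab.1, Subtype.coe_le_coe.mpr hab.2⟩) ?_ dprod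
      intro x y hxy h2
      have h2' := Prod.le_def.mp h2
      exact ⟨h2'.1, h2'.2⟩

end KDAux

namespace KDAux2
open KDAux

theorem chain_anti {α : Type u} [Preorder α] {f : ℕ → α} (hf : ∀ n, f (n + 1) ≤ f n) :
    ∀ m n, m ≤ n → f n ≤ f m := by
  intro m n h
  induction n with
  | zero => simpa [Nat.le_zero.mp h] using le_refl (f 0)
  | succ k ih =>
    rcases Nat.lt_or_ge m (k+1) with h' | h'
    · exact le_trans (hf k) (ih (Nat.lt_succ_iff.mp h'))
    · have : m = k + 1 := le_antisymm h h'
      simp [this]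

/-- Every poset with ACC has deviation above each element. -/
theorem exists_devLE_upper {α : Type u} [Preorder α] [WellFoundedGT α] (N : α) :
    ∃ o : Ordinal.{u}, DevLE {x : α // N ≤ x} o := by
  refine (IsWellFounded.wf (r := ((· > ·) : α → α → Prop))).induction
    (C := fun N => ∃ o : Ordinal.{u}, DevLE {x : α // N ≤ x} o) N ?_
  intro N ih
  classical
  have hnon : ∀ N' : {x : α // N < x}, {o : Ordinal.{u} | DevLE {x : α // N'.1 ≤ x} o}.Nonempty :=
    fun N' => ih N'.1 N'.2
  set dv : {x : α // N < x} → Ordinal.{u} :=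
    fun N' => sInf {o : Ordinal.{u} | DevLE {x : α // N'.1 ≤ x} o} with hdv
  have hdvmem : ∀ N', DevLE {x : α // N'.1 ≤ x} (dv N') := fun N' => csInf_mem (hnon N')
  refine ⟨Order.succ (⨆ N', dv N'), ?_⟩
  rw [DevLE]
  intro f hf
  by_cases hc : ∃ n, (f (n + 1)).1 ≤ N
  · obtain ⟨n₀, hn₀⟩ := hc
    refine ⟨n₀ + 1, fun n hn => Or.inl ?_⟩
    have h1 : (f n).1 ≤ N := le_trans (chain_anti hf (n₀+1) n hn) hn₀
    show (f n).1 ≤ (f (n+1)).1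
    exact le_trans h1 (f (n+1)).2
  · push_neg at hc
    refine ⟨0, fun n _ => ?_⟩
    have hlt : N < (f (n+1)).1 := lt_of_le_not_ge (f (n+1)).2 (hc n)
    set N' : {x : α // N < x} := ⟨(f (n+1)).1, hlt⟩
    have hle : dv N' < Order.succ (⨆ N'', dv N'') :=
      Order.lt_succ_iff.mpr (le_ciSup (Ordinal.bddAbove_range dv) N')
    refine Or.inr ⟨⟨dv N', hle⟩, ?_⟩
    refine devLE_transfer (fun y => (⟨y.1.1, y.2.1⟩ : {x : α // N'.1 ≤ x}))
      (fun a b hab => hab) ?_ (hdvmem N')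
    intro x y hxy h2
    exact h2

theorem exists_devLE {α : Type u} [Preorder α] [OrderBot α] [WellFoundedGT α] :
    ∃ o : Ordinal.{u}, DevLE α o := by
  obtain ⟨o, ho⟩ := exists_devLE_upper (⊥ : α)
  exact ⟨o, devLE_transfer (fun x => (⟨x, bot_le⟩ : {x : α // ⊥ ≤ x}))
    (fun a b hab => hab) (fun x y _ h2 => h2) ho⟩

/-- transfer to a lower interval -/
theorem devLE_Iic {α : Type u} [Preorder α] {o : Ordinal.{u}} (N : α) (h : DevLE α o) :
    DevLE {x : α // x ≤ N} o :=
  devLE_transfer (fun x => x.1) (fun a b hab => hab) (fun _ _ _ h2 => h2) h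

/-- combine a lower interval and upper interval bound using two monotone jointly
reflecting maps -/
theorem devLE_pair {α β γ : Type u} [Preorder α] [Preorder β] [Preorder γ]
    {o : Ordinal.{u}} (p : α → β) (q : α → γ) (hp : Monotone p) (hq : Monotone q)
    (hrefl : ∀ x y : α, y ≤ x → p x ≤ p y → q x ≤ q y → x ≤ y)
    (hβ : DevLE β o) (hγ : DevLE γ o) : DevLE α o := by
  refine devLE_transfer (fun x => (p x, q x))
    (fun a b hab => Prod.le_def.mpr ⟨hp hab, hq hab⟩) ?_ (devLE_prod hβ hγ)
  intro x y hxy h2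
  have h2' := Prod.le_def.mp h2
  exact hrefl x y hxy h2'.1 h2'.2

/-- modular lattice: bound below b from bound below a and bound on [a,b] -/
theorem devLE_step_lower {α : Type u} [Lattice α] [IsModularLattice α]
    {o : Ordinal.{u}} {a b : α} (hab : a ≤ b)
    (h₁ : DevLE {x : α // x ≤ a} o)
    (h₂ : DevLE {x : α // a ≤ x ∧ x ≤ b} o) :
    DevLE {x : α // x ≤ b} o := by
  refine devLE_pair (fun x => (⟨x.1 ⊓ a, inf_le_right⟩ : {x : α // x ≤ a}))
    (fun x => (⟨x.1 ⊔ a, le_sup_right, sup_le x.2 hab⟩ : {x : α // a ≤ x ∧ x ≤ b}))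
    (fun u v huv => show u.1 ⊓ a ≤ v.1 ⊓ a from inf_le_inf_right a (show u.1 ≤ v.1 from huv))
    (fun u v huv => show u.1 ⊔ a ≤ v.1 ⊔ a from sup_le_sup_right (show u.1 ≤ v.1 from huv) a)
    ?_ h₁ h₂
  intro x y hyx hpq hq
  have hpq' : x.1 ⊓ a ≤ y.1 ⊓ a := hpq
  have hq' : x.1 ⊔ a ≤ y.1 ⊔ a := hq
  show x.1 ≤ y.1
  have hax : a ⊓ x.1 ≤ y.1 := by
    rw [inf_comm]; exact le_trans hpq' inf_le_left
  calc x.1 ≤ (x.1 ⊔ a) ⊓ x.1 := le_inf le_sup_left le_rfl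
    _ ≤ (y.1 ⊔ a) ⊓ x.1 := inf_le_inf_right _ hq'
    _ = y.1 ⊔ (a ⊓ x.1) := sup_inf_assoc_of_le a hyx
    _ ≤ y.1 := sup_le le_rfl hax

/-- modular lattice: bound above a from bound on [a,b] and bound above b -/
theorem devLE_step_upper {α : Type u} [Lattice α] [IsModularLattice α]
    {o : Ordinal.{u}} {a b : α} (hab : a ≤ b)
    (h₁ : DevLE {x : α // a ≤ x ∧ x ≤ b} o)
    (h₂ : DevLE {x : α // b ≤ x} o) :
    DevLE {x : α // a ≤ x} o := by
  refine devLE_pair (fun x => (⟨x.1 ⊓ b, le_inf x.2 hab, inf_le_right⟩ : {x : α // a ≤ x ∧ x ≤ b}))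
    (fun x => (⟨x.1 ⊔ b, le_sup_right⟩ : {x : α // b ≤ x}))
    (fun u v huv => show u.1 ⊓ b ≤ v.1 ⊓ b from inf_le_inf_right b (show u.1 ≤ v.1 from huv))
    (fun u v huv => show u.1 ⊔ b ≤ v.1 ⊔ b from sup_le_sup_right (show u.1 ≤ v.1 from huv) b)
    ?_ h₁ h₂
  intro x y hyx hp hq
  have hp' : x.1 ⊓ b ≤ y.1 ⊓ b := hp
  have hq' : x.1 ⊔ b ≤ y.1 ⊔ b := hq
  show x.1 ≤ y.1
  have hbx : b ⊓ x.1 ≤ y.1 := by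
    rw [inf_comm]; exact le_trans hp' inf_le_left
  calc x.1 ≤ (x.1 ⊔ b) ⊓ x.1 := le_inf le_sup_left le_rfl
    _ ≤ (y.1 ⊔ b) ⊓ x.1 := inf_le_inf_right _ hq'
    _ = y.1 ⊔ (b ⊓ x.1) := sup_inf_assoc_of_le b hyx
    _ ≤ y.1 := sup_le le_rfl hbx

end KDAux2

namespace KDMod
open KDAux KDAux2

variable {R : Type u} [Ring R] (B : TwoSidedIdeal R)

/-- descending (in constraints) chain of right submodules of `Fin m → R`:
`cRc B m k` = tuples whose coordinates `≥ k` lie in `B`. -/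
def cRc (m k : ℕ) : Submodule Rᵐᵒᵖ (Fin m → R) where
  carrier := {v | ∀ i : Fin m, k ≤ i.1 → v i ∈ B}
  zero_mem' := fun i _ => B.zero_mem
  add_mem' := fun ha hb i hi => B.add_mem (ha i hi) (hb i hi)
  smul_mem' := fun r v hv i hi => by
    have h2 : (r • v) i = v i * r.unop := rfl
    rw [h2]
    exact B.mul_mem_right _ _ (hv i hi)

theorem cRc_mem {m k : ℕ} {v : Fin m → R} :
    v ∈ cRc B m k ↔ ∀ i : Fin m, k ≤ i.1 → v i ∈ B := Iff.rfl

theorem cRc_mono {m : ℕ} {k k' : ℕ} (h : k ≤ k') : cRc B m k ≤ cRc B m k' :=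
  fun _ hv i hi => hv i (le_trans h hi)

theorem cRc_top (m : ℕ) : cRc B m m = ⊤ := by
  rw [eq_top_iff]
  intro v _ i hi
  exact absurd hi (not_le.mpr i.2)

/-- left-module chain: `cLc B m k` = tuples with all coordinates in B and
coordinates `≥ k` equal to 0. -/
def cLc (m k : ℕ) : Submodule R (Fin m → R) where
  carrier := {v | (∀ i : Fin m, v i ∈ B) ∧ ∀ i : Fin m, k ≤ i.1 → v i = 0}
  zero_mem' := ⟨fun _ => B.zero_mem, fun _ _ => rfl⟩
  add_mem' := fun ha hb =>
    ⟨fun i => B.add_mem (ha.1 i) (hb.1 i), fun i hi => by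
      show _ + _ = (0 : R)
      rw [ha.2 i hi, hb.2 i hi, add_zero]⟩
  smul_mem' := fun r v hv =>
    ⟨fun i => B.mul_mem_left _ _ (hv.1 i), fun i hi => by
      show r * v i = 0
      rw [hv.2 i hi, mul_zero]⟩

theorem cLc_mem {m k : ℕ} {v : Fin m → R} :
    v ∈ cLc B m k ↔ (∀ i : Fin m, v i ∈ B) ∧ ∀ i : Fin m, k ≤ i.1 → v i = 0 := Iff.rfl

theorem cLc_mono {m : ℕ} {k k' : ℕ} (h : k ≤ k') : cLc B m k ≤ cLc B m k' :=
  fun _ hv => ⟨hv.1, fun i hi => hv.2 i (le_trans h hi)⟩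

theorem cLc_zero_le_bot (m : ℕ) : cLc B m 0 ≤ ⊥ := by
  intro v hv
  have : v = 0 := funext fun i => hv.2 i (Nat.zero_le _)
  simp [this]

end KDMod


namespace KDMod
open KDAux KDAux2
variable {R : Type u} [Ring R] (B : TwoSidedIdeal R)

theorem pieceR {m : ℕ} (k : Fin m) {o : Ordinal.{u}}
    (hT : DevLE {K : Submodule Rᵐᵒᵖ R // rightIdealOf B ≤ K} o) :
    DevLE {x : Submodule Rᵐᵒᵖ (Fin m → R) // cRc B m k.1 ≤ x ∧ x ≤ cRc B m (k.1 + 1)} o := by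
  classical
  refine devLE_transfer
    (fun x => (⟨Submodule.comap (LinearMap.single Rᵐᵒᵖ (fun _ => R) k) x.1, ?_⟩ :
      {K : Submodule Rᵐᵒᵖ R // rightIdealOf B ≤ K}))
    (fun u v huv => Submodule.comap_mono huv) ?_ hT
  · -- bound : rightIdealOf B ≤ comap (single k) x.1
    intro b hb
    refine x.2.1 ?_
    intro i hi
    have hcoe : (LinearMap.single Rᵐᵒᵖ (fun _ => R) k) b = Pi.single k b := rfl
    rw [hcoe]
    by_cases hik : i = k
    · subst hik; rw [Pi.single_eq_same]; exact hb
    · rw [Pi.single_eq_of_ne hik]; exact B.zero_mem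
  · -- relative reflection
    intro x y hyx h2
    intro v hv
    have hvx : v ∈ x.1 := hv
    -- the complement part lies in `cRc B m k.1`
    have hcompl : v - Pi.single k (v k) ∈ cRc B m k.1 := by
      intro i hi
      simp only [Pi.sub_apply]
      by_cases hik : i = k
      · subst hik; rw [Pi.single_eq_same, sub_self]; exact B.zero_mem
      · rw [Pi.single_eq_of_ne hik, sub_zero]
        refine x.2.2 hvx i ?_
        exact Nat.lt_of_le_of_ne hi (Ne.symm (Fin.val_ne_of_ne hik))
    have hsingle : Pi.single k (v k) ∈ x.1 := by
      have : v - (v - Pi.single k (v k)) ∈ x.1 :=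
        Submodule.sub_mem _ hvx (x.2.1 hcompl)
      simpa using this
    have hmem : v k ∈ Submodule.comap (LinearMap.single Rᵐᵒᵖ (fun _ => R) k) x.1 := hsingle
    have hks : Pi.single k (v k) ∈ y.1 := h2 hmem
    have : (v - Pi.single k (v k)) + Pi.single k (v k) ∈ y.1 :=
      Submodule.add_mem _ (y.2.1 hcompl) hks
    simpa using this

theorem filtR (m : ℕ) {o : Ordinal.{u}}
    (hT : DevLE {K : Submodule Rᵐᵒᵖ R // rightIdealOf B ≤ K} o) :
    DevLE {x : Submodule Rᵐᵒᵖ (Fin m → R) // cRc B m 0 ≤ x} o := by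
  suffices h : ∀ k : ℕ, DevLE {x : Submodule Rᵐᵒᵖ (Fin m → R) // cRc B m (m - k) ≤ x} o by
    have := h m
    rwa [Nat.sub_self] at this
  intro k
  induction k with
  | zero =>
    rw [Nat.sub_zero]
    refine devLE_of_trivial (fun x y => ?_) o
    show x.1 ≤ y.1
    have hy : (⊤ : Submodule Rᵐᵒᵖ (Fin m → R)) ≤ y.1 := by
      rw [← cRc_top B m]; exact y.2
    exact le_trans le_top hy
  | succ k ih =>
    by_cases hk : k < m
    · have hsub : m - (k + 1) + 1 = m - k := by omega
      have hlt : m - (k + 1) < m := by omega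
      rw [← hsub] at ih
      exact devLE_step_upper (cRc_mono B (Nat.le_succ _))
        (pieceR B (⟨m - (k + 1), hlt⟩ : Fin m) hT) ih
    · have h0 : m - (k + 1) = m - k := by omega
      rw [h0]
      exact ih

theorem pieceL {m : ℕ} (k : Fin m) {o : Ordinal.{u}}
    (hB : DevLE {I : Submodule R R // I ≤ leftIdealOf B} o) :
    DevLE {x : Submodule R (Fin m → R) // cLc B m k.1 ≤ x ∧ x ≤ cLc B m (k.1 + 1)} o := by
  classical
  refine devLE_transfer
    (fun x => (⟨Submodule.map (LinearMap.proj k) x.1, ?_⟩ :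
      {I : Submodule R R // I ≤ leftIdealOf B}))
    (fun u v huv => Submodule.map_mono huv) ?_ hB
  · -- bound : map proj x.1 ≤ leftIdealOf B
    rintro _ ⟨w, hw, rfl⟩
    exact (x.2.2 hw).1 k
  · intro x y hyx h2
    intro v hv
    have hvk : v k ∈ Submodule.map (LinearMap.proj k) y.1 :=
      h2 ⟨v, hv, rfl⟩
    obtain ⟨w, hw, hwk⟩ := hvk
    have hvc : v ∈ cLc B m (k.1 + 1) := x.2.2 hv
    have hwc : w ∈ cLc B m (k.1 + 1) := y.2.2 hw
    have hcompl : v - w ∈ cLc B m k.1 := by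
      constructor
      · intro i
        show v i - w i ∈ B
        exact B.sub_mem (hvc.1 i) (hwc.1 i)
      · intro i hi
        show v i - w i = 0
        by_cases hik : i = k
        · subst hik
          have hwk' : w i = v i := hwk
          rw [← hwk', sub_self]
        · have hi' : k.1 + 1 ≤ i.1 :=
            Nat.lt_of_le_of_ne hi (Ne.symm (Fin.val_ne_of_ne hik))
          rw [hvc.2 i hi', hwc.2 i hi', sub_zero]
    have : (v - w) + w ∈ y.1 := Submodule.add_mem _ (y.2.1 hcompl) hw
    simpa using this

theorem filtL (m : ℕ) {o : Ordinal.{u}}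
    (hB : DevLE {I : Submodule R R // I ≤ leftIdealOf B} o) :
    DevLE {x : Submodule R (Fin m → R) // x ≤ cLc B m m} o := by
  suffices h : ∀ k : ℕ, k ≤ m → DevLE {x : Submodule R (Fin m → R) // x ≤ cLc B m k} o from
    h m le_rfl
  intro k
  induction k with
  | zero =>
    intro _
    refine devLE_of_trivial (fun x y => ?_) o
    show x.1 ≤ y.1
    exact le_trans (le_trans x.2 (cLc_zero_le_bot B m)) bot_le
  | succ k ih =>
    intro hk1
    have hk : k < m := hk1
    exact devLE_step_lower (cLc_mono B (Nat.le_succ _))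
      (ih (le_of_lt hk)) (pieceL B (⟨k, hk⟩ : Fin m) hB)

end KDMod


namespace KDMain

/-- `Rᵐᵒᵖ` is linearly equivalent to `R` as an `Rᵐᵒᵖ`-module. -/
def opSelfEquiv (R : Type u) [Ring R] : Rᵐᵒᵖ ≃ₗ[Rᵐᵒᵖ] R where
  toFun := MulOpposite.unop
  invFun := MulOpposite.op
  left_inv := fun _ => rfl
  right_inv := fun _ => rfl
  map_add' := fun _ _ => rfl
  map_smul' := fun _ _ => rfl

/-- left annihilator of a two-sided ideal, as a right ideal -/
def lannRight (R : Type u) [Ring R] (B : TwoSidedIdeal R) : Submodule Rᵐᵒᵖ R where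
  carrier := {x : R | ∀ y ∈ B, x * y = 0}
  zero_mem' := fun y _ => zero_mul y
  add_mem' := fun {a b} ha hb y hy => by rw [add_mul, ha y hy, hb y hy, add_zero]
  smul_mem' := fun r x hx y hy => by
    show x * r.unop * y = 0
    rw [mul_assoc]
    exact hx _ (B.mul_mem_left _ _ hy)

/-- preimage of a right ideal of `R/B` under the quotient map -/
def qComap {R : Type u} [Ring R] (B : TwoSidedIdeal R)
    (K : Submodule (B.ringCon.Quotient)ᵐᵒᵖ B.ringCon.Quotient) : Submodule Rᵐᵒᵖ R where
  carrier := {x : R | (x : B.ringCon.Quotient) ∈ K}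
  zero_mem' := by
    show ((0 : R) : B.ringCon.Quotient) ∈ K
    rw [RingCon.coe_zero]; exact K.zero_mem
  add_mem' := fun {a b} ha hb => by
    show ((a + b : R) : B.ringCon.Quotient) ∈ K
    rw [RingCon.coe_add]; exact K.add_mem ha hb
  smul_mem' := fun r x hx => by
    show ((x * r.unop : R) : B.ringCon.Quotient) ∈ K
    have h : ((x * r.unop : R) : B.ringCon.Quotient) =
        (MulOpposite.op ((r.unop : R) : B.ringCon.Quotient)) • (x : B.ringCon.Quotient) := by
      rw [RingCon.coe_mul]; rfl
    rw [h]
    exact K.smul_mem _ hx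

/-- image of a right ideal of `R` under the quotient map -/
def qMap {R : Type u} [Ring R] (B : TwoSidedIdeal R) (K : Submodule Rᵐᵒᵖ R) :
    Submodule (B.ringCon.Quotient)ᵐᵒᵖ B.ringCon.Quotient where
  carrier := {s | ∃ x ∈ K, (x : B.ringCon.Quotient) = s}
  zero_mem' := ⟨0, K.zero_mem, RingCon.coe_zero _⟩
  add_mem' := by
    rintro a b ⟨x, hx, rfl⟩ ⟨y, hy, rfl⟩
    exact ⟨x + y, K.add_mem hx hy, RingCon.coe_add _ _ _⟩
  smul_mem' := by
    rintro s t ⟨x, hx, rfl⟩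
    obtain ⟨r, hr⟩ : ∃ r : R, (r : B.ringCon.Quotient) = s.unop :=
      Quot.inductionOn s.unop fun r => ⟨r, rfl⟩
    refine ⟨x * r, K.smul_mem (MulOpposite.op r) hx, ?_⟩
    rw [RingCon.coe_mul, hr]
    rfl

end KDMain

/-- If `R` is Noetherian and right Krull-homogeneous and `B` is the largest
left ideal with `|B|_l < |R|_l`, then `|R/B|_r = |R|_r`. -/
theorem stmt4 (R : Type u) [Ring R] [IsNoetherianRing R] [IsNoetherianRing Rᵐᵒᵖ]
    (hKH : RightKH R) (B : TwoSidedIdeal R)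
    (h1 : lIdealDim R (leftIdealOf B) < lKdim R)
    (h2 : ∀ K : Submodule R R, lIdealDim R K < lKdim R → K ≤ leftIdealOf B) :
    rKdimQ B = rKdim R := by
  classical
  haveI : IsNoetherian Rᵐᵒᵖ R := isNoetherian_of_linearEquiv (KDMain.opSelfEquiv R)
  have hexR : ∃ o : Ordinal.{u}, DevLE (Submodule Rᵐᵒᵖ R) o := KDAux2.exists_devLE
  have hexL : ∃ o : Ordinal.{u}, DevLE (Submodule R R) o := KDAux2.exists_devLE
  have hsurj : ∀ s : B.ringCon.Quotient, ∃ x : R, (x : B.ringCon.Quotient) = s :=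
    fun s => Quot.inductionOn s fun x => ⟨x, rfl⟩
  have hker : ∀ x y : R, (x : B.ringCon.Quotient) = (y : B.ringCon.Quotient) ↔ x - y ∈ B :=
    fun x y => (RingCon.eq _).trans (B.rel_iff x y)
  -- transfer of bounds from right ideals of `R` to right ideals of `R/B`
  have tSR : ∀ o : Ordinal.{u}, DevLE (Submodule Rᵐᵒᵖ R) o →
      DevLE (Submodule (B.ringCon.Quotient)ᵐᵒᵖ B.ringCon.Quotient) o := by
    intro o h
    refine KDAux.devLE_transfer (KDMain.qComap B) (fun K K' hKK x hx => hKK hx) ?_ h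
    intro X Y hYX h2' s hs
    obtain ⟨x, rfl⟩ := hsurj s
    exact h2' (hs : x ∈ KDMain.qComap B X)
  have hRmem : DevLE (Submodule Rᵐᵒᵖ R) (rKdim R) := csInf_mem hexR
  -- (≤) direction
  have hle : rKdimQ B ≤ rKdim R := csInf_le (OrderBot.bddBelow _) (tSR _ hRmem)
  -- transfer of bounds from right ideals of `R/B` to the interval above `B`
  have tTS : ∀ o : Ordinal.{u},
      DevLE (Submodule (B.ringCon.Quotient)ᵐᵒᵖ B.ringCon.Quotient) o →
      DevLE {K : Submodule Rᵐᵒᵖ R // rightIdealOf B ≤ K} o := by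
    intro o h
    refine KDAux.devLE_transfer (fun K => KDMain.qMap B K.1) ?_ ?_ h
    · rintro K K' hKK s ⟨x, hx, rfl⟩
      exact ⟨x, hKK hx, rfl⟩
    · intro X Y hYX h2' x hx
      have hmx : (x : B.ringCon.Quotient) ∈ KDMain.qMap B X.1 := ⟨x, hx, rfl⟩
      obtain ⟨y, hy, hyx⟩ := h2' hmx
      have hxy : x - y ∈ B := by
        have h' : y - x ∈ B := (hker y x).mp hyx
        have := B.neg_mem h'
        rwa [neg_sub] at this
      have hxmem : x - y ∈ Y.1 := Y.2 hxy
      have hfin := Y.1.add_mem hy hxmem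
      rwa [add_sub_cancel] at hfin
  -- the left annihilator of B as a right ideal
  set A : Submodule Rᵐᵒᵖ R := KDMain.lannRight R B with hAdef
  have hA : A ≠ ⊥ := by
    intro h0
    obtain ⟨s, hs⟩ := IsNoetherian.noetherian (rightIdealOf B)
    set m := s.card with hm
    set b : Fin m → R := fun i => ((s.equivFin.symm i) : R) with hb
    have hbB : ∀ i, b i ∈ B := by
      intro i
      have h' : b i ∈ (s : Set R) := Finset.mem_coe.mpr (s.equivFin.symm i).2
      have h'' : b i ∈ Submodule.span Rᵐᵒᵖ (s : Set R) := Submodule.subset_span h'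
      rw [hs] at h''
      exact h''
    let φ : R →ₗ[R] (Fin m → R) :=
      { toFun := fun x i => x * b i
        map_add' := fun x y => funext fun i => add_mul x y (b i)
        map_smul' := fun r x => funext fun i => mul_assoc r x (b i) }
    have hφker : ∀ x : R, (∀ i, x * b i = 0) → x = 0 := by
      intro x hx
      have hxA : x ∈ A := by
        intro y hy
        have hy' : y ∈ rightIdealOf B := hy
        rw [← hs] at hy'
        refine Submodule.span_induction (p := fun y' _ => x * y' = 0) ?_ ?_ ?_ ?_ hy'
        · intro z hz
          have : b (s.equivFin ⟨z, hz⟩) = z := by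
            rw [hb]; simp
          rw [← this]; exact hx _
        · exact mul_zero x
        · intro y₁ y₂ _ _ hy₁ hy₂
          rw [mul_add, hy₁, hy₂, add_zero]
        · intro c y' _ hy'
          show x * (y' * c.unop) = 0
          rw [← mul_assoc, hy', zero_mul]
      rw [h0] at hxA
      simpa using hxA
    have hexBL : {o : Ordinal.{u} | DevLE {I : Submodule R R // I ≤ leftIdealOf B} o}.Nonempty := by
      obtain ⟨o, ho⟩ := hexL
      exact ⟨o, KDAux2.devLE_Iic _ ho⟩
    have hoL : DevLE {I : Submodule R R // I ≤ leftIdealOf B} (lIdealDim R (leftIdealOf B)) :=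
      csInf_mem hexBL
    have h3 := KDMod.filtL B m hoL
    have h4 : DevLE (Submodule R R) (lIdealDim R (leftIdealOf B)) := by
      refine KDAux.devLE_transfer
        (fun I => (⟨Submodule.map φ I, ?_⟩ :
          {x : Submodule R (Fin m → R) // x ≤ KDMod.cLc B m m}))
        (fun I J hIJ => Submodule.map_mono hIJ) ?_ h3
      · rintro _ ⟨x, hx, rfl⟩
        exact ⟨fun i => B.mul_mem_left _ _ (hbB i), fun i hi => absurd hi (not_le.mpr i.2)⟩
      · intro X Y hYX h2' x hx
        have hmx : φ x ∈ Submodule.map φ Y := h2' ⟨x, hx, rfl⟩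
        obtain ⟨y, hy, hyx⟩ := hmx
        have hyx' : y = x := by
          have hzero : ∀ i, (y - x) * b i = 0 := by
            intro i
            have hc : y * b i = x * b i := congrFun hyx i
            rw [sub_mul, hc, sub_self]
          have := hφker (y - x) hzero
          exact sub_eq_zero.mp this
        rwa [hyx'] at hy
    have hcon : lKdim R ≤ lIdealDim R (leftIdealOf B) := csInf_le (OrderBot.bddBelow _) h4
    exact absurd h1 (not_lt.mpr hcon)
  have hdim : rIdealDim R A = rKdim R := hKH A hA
  obtain ⟨t, ht⟩ := IsNoetherian.noetherian A
  set m' := t.card with hm'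
  set a : Fin m' → R := fun i => ((t.equivFin.symm i) : R) with ha
  have haA : ∀ i, a i ∈ A := by
    intro i
    have h' : a i ∈ (t : Set R) := Finset.mem_coe.mpr (t.equivFin.symm i).2
    have h'' : a i ∈ Submodule.span Rᵐᵒᵖ (t : Set R) := Submodule.subset_span h'
    rw [ht] at h''
    exact h''
  let ψ : (Fin m' → R) →ₗ[Rᵐᵒᵖ] R :=
    { toFun := fun v => ∑ i, a i * v i
      map_add' := fun v w => by
        show (∑ i, a i * (v i + w i)) = _
        simp only [mul_add]
        rw [Finset.sum_add_distrib]
      map_smul' := fun r v => by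
        show (∑ i, a i * (v i * r.unop)) = (∑ i, a i * v i) * r.unop
        rw [Finset.sum_mul]
        exact Finset.sum_congr rfl fun i _ => (mul_assoc _ _ _).symm }
  have hmemA : ∀ x, x ∈ A → ∃ v : Fin m' → R, ψ v = x := by
    intro x hx
    rw [← ht] at hx
    have hrange : (t : Set R) = Set.range a := by
      ext z
      constructor
      · intro hz
        exact ⟨t.equivFin ⟨z, hz⟩, by rw [ha]; simp⟩
      · rintro ⟨i, rfl⟩
        exact Finset.mem_coe.mpr (t.equivFin.symm i).2
    rw [hrange] at hx
    obtain ⟨c, hc⟩ := (Submodule.mem_span_range_iff_exists_fun Rᵐᵒᵖ).mp hx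
    refine ⟨fun i => (c i).unop, ?_⟩
    rw [← hc]
    show (∑ i, a i * (c i).unop) = ∑ i, c i • a i
    exact Finset.sum_congr rfl fun i _ => rfl
  have hSmem : DevLE (Submodule (B.ringCon.Quotient)ᵐᵒᵖ B.ringCon.Quotient) (rKdimQ B) :=
    csInf_mem ⟨rKdim R, tSR _ hRmem⟩
  have hT := tTS _ hSmem
  have hFR := KDMod.filtR B m' hT
  have hAle : DevLE {I : Submodule Rᵐᵒᵖ R // I ≤ A} (rKdimQ B) := by
    refine KDAux.devLE_transfer
      (fun I => (⟨Submodule.comap ψ I.1, ?_⟩ :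
        {x : Submodule Rᵐᵒᵖ (Fin m' → R) // KDMod.cRc B m' 0 ≤ x}))
      (fun I J hIJ => Submodule.comap_mono hIJ) ?_ hFR
    · intro v hv
      show ψ v ∈ I.1
      have hz : ψ v = 0 := by
        show (∑ i, a i * v i) = 0
        refine Finset.sum_eq_zero fun i _ => ?_
        exact haA i _ (hv i (Nat.zero_le _))
      rw [hz]
      exact I.1.zero_mem
    · intro X Y hYX h2' x hx
      obtain ⟨v, hv⟩ := hmemA x (X.2 hx)
      have hvX : v ∈ Submodule.comap ψ X.1 := by
        show ψ v ∈ X.1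
        rw [hv]; exact hx
      have hvY : ψ v ∈ Y.1 := h2' hvX
      rwa [hv] at hvY
  have hge : rKdim R ≤ rKdimQ B := by
    rw [← hdim]
    exact csInf_le (OrderBot.bddBelow _) hAle
  exact le_antisymm hle hge
end

section
/- Let R be a Noetherian ring that is right Krull-homogeneous, and let B be the largest left ideal of R with |B|_l < |R|_l. Then R/B is both left and right Krull-homogeneous, with |R/B|_r = |R|_r and |R/B|_l = |R|_l. -/
universe u

section DevBasic

theorem devLE_def {α : Type u} [Preorder α] {o : Ordinal.{u}} :
    DevLE α o ↔ ∀ f : ℕ → α, (∀ n, f (n + 1) ≤ f n) →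
    ∃ N : ℕ, ∀ n, N ≤ n →
      f n ≤ f (n + 1) ∨
        ∃ o' : {x : Ordinal.{u} // x < o},
          DevLE {y : α // f (n + 1) ≤ y ∧ y ≤ f n} o'.1 := by
  rw [DevLE]

theorem DevLE.mono {α : Type u} [Preorder α] {o p : Ordinal.{u}} (h : DevLE α o)
    (hop : o ≤ p) : DevLE α p := by
  rw [devLE_def] at h ⊢
  intro f hf
  obtain ⟨N, hN⟩ := h f hf
  refine ⟨N, fun n hn => ?_⟩
  rcases hN n hn with h1 | ⟨⟨o', ho'⟩, hd⟩
  · exact Or.inl h1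
  · exact Or.inr ⟨⟨o', ho'.trans_le hop⟩, hd⟩

/-- Transfer of `DevLE` along an order embedding, downwards. -/
theorem DevLE.of_embedding : ∀ (o : Ordinal.{u}) {α β : Type u} [Preorder α] [Preorder β]
    (_ : α ↪o β), DevLE β o → DevLE α o := by
  intro o
  induction o using Ordinal.induction with
  | h o IH =>
    intro α β _ _ e h
    rw [devLE_def] at h ⊢
    intro f hf
    obtain ⟨N, hN⟩ := h (fun n => e (f n)) (fun n => e.monotone (hf n))
    refine ⟨N, fun n hn => ?_⟩
    rcases hN n hn with h1 | ⟨⟨o', ho'⟩, hd⟩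
    · exact Or.inl (e.le_iff_le.mp h1)
    · refine Or.inr ⟨⟨o', ho'⟩, IH o' ho' ?_ hd⟩
      exact {
        toFun := fun x => ⟨e x.1, e.monotone x.2.1, e.monotone x.2.2⟩
        inj' := fun a b hab => Subtype.ext (e.injective (congrArg Subtype.val hab))
        map_rel_iff' := fun {a b} => by
          exact e.le_iff_le (a := a.1) (b := b.1) }

theorem devLE_set_eq_of_iso {α β : Type u} [Preorder α] [Preorder β] (e : α ≃o β) :
    {o : Ordinal.{u} | DevLE α o} = {o | DevLE β o} := by
  ext o
  exact ⟨fun h => DevLE.of_embedding o e.symm.toOrderEmbedding h,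
    fun h => DevLE.of_embedding o e.toOrderEmbedding h⟩

theorem dev_eq_of_iso {α β : Type u} [Preorder α] [Preorder β] (e : α ≃o β) :
    dev α = dev β := by
  unfold dev; rw [devLE_set_eq_of_iso e]

theorem dev_le {α : Type u} [Preorder α] {o : Ordinal.{u}} (h : DevLE α o) : dev α ≤ o :=
  csInf_le' h

theorem devLE_dev {α : Type u} [Preorder α] (h : ∃ o, DevLE α o) : DevLE α (dev α) :=
  csInf_mem h

theorem hasDev_of_embedding {α β : Type u} [Preorder α] [Preorder β] (e : α ↪o β)
    (h : ∃ o, DevLE β o) : ∃ o, DevLE α o := by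
  obtain ⟨o, ho⟩ := h; exact ⟨o, DevLE.of_embedding o e ho⟩

theorem dev_le_of_embedding {α β : Type u} [Preorder α] [Preorder β] (e : α ↪o β)
    (h : ∃ o, DevLE β o) : dev α ≤ dev β :=
  dev_le (DevLE.of_embedding _ e (devLE_dev h))

/-- An interval with crossed endpoints satisfies every deviation bound. -/
theorem devLE_crossed {α : Type u} [Preorder α] {a c : α} (h : c ≤ a) (o : Ordinal.{u}) :
    DevLE {y : α // a ≤ y ∧ y ≤ c} o := by
  rw [devLE_def]
  intro f hf
  refine ⟨0, fun n _ => Or.inl ?_⟩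
  show (f n : α) ≤ (f (n + 1) : α)
  exact (f n).2.2.trans (h.trans (f (n + 1)).2.1)

theorem devLE_of_subsingleton {α : Type u} [Preorder α] [Subsingleton α] (o : Ordinal.{u}) :
    DevLE α o := by
  rw [devLE_def]
  intro f hf
  exact ⟨0, fun n _ => Or.inl (le_of_eq (Subsingleton.elim _ _))⟩

/-- Transfer of `DevLE` between two preorder instances on the same type whose orders agree. -/
theorem devLE_transfer {α : Type u} {p q : Preorder α}
    (hpq : ∀ a b : α, p.le a b ↔ q.le a b) {o : Ordinal.{u}} (h : @DevLE α q o) :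
    @DevLE α p o :=
  @DevLE.of_embedding o α α p q
    (@RelEmbedding.mk α α _ _ ⟨id, fun _ _ h => h⟩ (fun {a b} => (hpq a b).symm)) h

end DevBasic

theorem devLE_of_split : ∀ (o : Ordinal.{u}) {α : Type u} [Lattice α] [IsModularLattice α]
    (b : α), DevLE {x : α // x ≤ b} o → DevLE {x : α // b ≤ x} o → DevLE α o := by
  intro o
  induction o using Ordinal.induction with
  | h o IH =>
    intro α _ _ b hlow hup
    rw [devLE_def]
    intro f hf
    rw [devLE_def] at hlow hup
    obtain ⟨N₁, hN₁⟩ := hlow (fun n => ⟨f n ⊓ b, inf_le_right⟩)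
      (fun n => inf_le_inf_right b (hf n))
    obtain ⟨N₂, hN₂⟩ := hup (fun n => ⟨f n ⊔ b, le_sup_right⟩)
      (fun n => sup_le_sup_right (hf n) b)
    refine ⟨max N₁ N₂, fun n hn => ?_⟩
    have hg := hN₁ n (le_trans (le_max_left _ _) hn)
    have hh := hN₂ n (le_trans (le_max_right _ _) hn)
    by_cases hstep : (f n ⊓ b ≤ f (n+1) ⊓ b) ∧ (f n ⊔ b ≤ f (n+1) ⊔ b)
    · refine Or.inl ?_
      have h1 : f n ≤ f (n+1) ⊔ b := le_sup_left.trans hstep.2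
      have h2 : b ⊓ f n ≤ f (n+1) := by
        rw [inf_comm]; exact hstep.1.trans inf_le_left
      calc f n = f n ⊓ (f (n+1) ⊔ b) := (inf_eq_left.mpr h1).symm
        _ = (f (n+1) ⊔ b) ⊓ f n := inf_comm _ _
        _ = f (n+1) ⊔ b ⊓ f n := sup_inf_assoc_of_le b (hf n)
        _ ≤ f (n+1) := sup_le le_rfl h2
    · have hpos : (0 : Ordinal.{u}) < o := by
        rcases hg with h1 | ⟨⟨o', ho'⟩, _⟩
        · rcases hh with h2 | ⟨⟨o', ho'⟩, _⟩
          · exact absurd ⟨h1, h2⟩ hstep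
          · exact lt_of_le_of_lt (zero_le (a := o')) ho'
        · exact lt_of_le_of_lt (zero_le (a := o')) ho'
      obtain ⟨o₁, ho₁, hI₁⟩ :
          ∃ o₁ < o, DevLE {z : α // f (n+1) ⊓ b ≤ z ∧ z ≤ f n ⊓ b} o₁ := by
        rcases hg with h1 | ⟨⟨o', ho'⟩, hd⟩
        · exact ⟨0, hpos, devLE_crossed (show f n ⊓ b ≤ f (n+1) ⊓ b from h1) 0⟩
        · refine ⟨o', ho', DevLE.of_embedding o' ?_ hd⟩
          exact OrderEmbedding.ofMapLEIff
            (fun z => ⟨⟨z.1, le_trans z.2.2 inf_le_right⟩, z.2.1, z.2.2⟩)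
            (fun _ _ => Iff.rfl)
      obtain ⟨o₂, ho₂, hI₂⟩ :
          ∃ o₂ < o, DevLE {z : α // f (n+1) ⊔ b ≤ z ∧ z ≤ f n ⊔ b} o₂ := by
        rcases hh with h1 | ⟨⟨o', ho'⟩, hd⟩
        · exact ⟨0, hpos, devLE_crossed (show f n ⊔ b ≤ f (n+1) ⊔ b from h1) 0⟩
        · refine ⟨o', ho', DevLE.of_embedding o' ?_ hd⟩
          exact OrderEmbedding.ofMapLEIff
            (fun z => ⟨⟨z.1, le_trans le_sup_right z.2.1⟩, z.2.1, z.2.2⟩)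
            (fun _ _ => Iff.rfl)
      refine Or.inr ⟨⟨max o₁ o₂, max_lt ho₁ ho₂⟩, ?_⟩
      letI latJ : Lattice {y : α // f (n + 1) ≤ y ∧ y ≤ f n} :=
        Subtype.lattice
          (fun x y hx hy => ⟨hx.1.trans le_sup_left, sup_le hx.2 hy.2⟩)
          (fun x y hx hy => ⟨le_inf hx.1 hy.1, inf_le_left.trans hx.2⟩)
      haveI modJ : IsModularLattice {y : α // f (n + 1) ≤ y ∧ y ≤ f n} := by
        constructor
        intro x y z hxz
        show ((x ⊔ y) ⊓ z : α) ≤ ((x : α) ⊔ (y ⊓ z : _))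
        exact IsModularLattice.sup_inf_le_assoc_of_le _ hxz
      have key : ∀ x : {y : α // f (n + 1) ≤ y ∧ y ≤ f n},
          (x : α) ≤ f (n+1) ⊔ (f n ⊓ b) → (x : α) = f (n+1) ⊔ ((x : α) ⊓ b) := by
        intro x hx
        calc (x : α) = (x : α) ⊓ (f (n+1) ⊔ (f n ⊓ b)) := (inf_eq_left.mpr hx).symm
          _ = (f (n+1) ⊔ (f n ⊓ b)) ⊓ (x : α) := inf_comm _ _
          _ = f (n+1) ⊔ (f n ⊓ b) ⊓ (x : α) := sup_inf_assoc_of_le _ x.2.1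
          _ = f (n+1) ⊔ ((x : α) ⊓ b) := by
                rw [inf_comm (f n ⊓ b) (x : α), ← inf_assoc, inf_eq_left.mpr x.2.2]
      refine devLE_transfer (fun a b => Iff.rfl)
        (IH (max o₁ o₂) (max_lt ho₁ ho₂)
          (α := {y : α // f (n + 1) ≤ y ∧ y ≤ f n})
          ⟨f (n+1) ⊔ (f n ⊓ b), ⟨le_sup_left, sup_le (hf n) inf_le_left⟩⟩ ?_ ?_)
      · refine DevLE.of_embedding _ ?_ (hI₁.mono (le_max_left _ _))
        refine OrderEmbedding.ofMapLEIff
          (fun x => ⟨(x.1 : α) ⊓ b, inf_le_inf_right b x.1.2.1, inf_le_inf_right b x.1.2.2⟩)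
          (fun x y => ⟨fun h => ?_, fun h => inf_le_inf_right b (show (x.1 : α) ≤ y.1 from h)⟩)
        show (x.1 : α) ≤ (y.1 : α)
        have hx := key x.1 x.2
        have hy := key y.1 y.2
        calc (x.1 : α) = f (n+1) ⊔ ((x.1 : α) ⊓ b) := hx
          _ ≤ f (n+1) ⊔ ((y.1 : α) ⊓ b) := sup_le_sup_left h _
          _ = (y.1 : α) := hy.symm
      · refine DevLE.of_embedding _ ?_ (hI₂.mono (le_max_right _ _))
        refine OrderEmbedding.ofMapLEIff
          (fun x => ⟨(x.1 : α) ⊔ b, sup_le_sup_right x.1.2.1 b, sup_le_sup_right x.1.2.2 b⟩)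
          (fun x y => ⟨fun h => ?_, fun h => sup_le_sup_right (show (x.1 : α) ≤ y.1 from h) b⟩)
        show (x.1 : α) ≤ (y.1 : α)
        have hby : b ⊓ f n ≤ (y.1 : α) := by
          rw [inf_comm]
          exact le_trans (le_trans le_sup_right (le_of_eq rfl) :
            f n ⊓ b ≤ f (n+1) ⊔ (f n ⊓ b)) y.2
        calc (x.1 : α) ≤ ((x.1 : α) ⊔ b) ⊓ f n := le_inf le_sup_left x.1.2.2
          _ ≤ ((y.1 : α) ⊔ b) ⊓ f n := inf_le_inf_right _ (show (x.1 : α) ⊔ b ≤ (y.1 : α) ⊔ b from h)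
          _ = (y.1 : α) ⊔ b ⊓ f n := sup_inf_assoc_of_le b y.1.2.2
          _ ≤ (y.1 : α) := sup_le le_rfl hby

section ModuleDim
open Submodule

noncomputable def SDim (S : Type u) [Ring S] (M : Type u) [AddCommGroup M] [Module S M] :
    Ordinal.{u} := dev (Submodule S M)

variable {S : Type u} [Ring S] {M N : Type u} [AddCommGroup M] [AddCommGroup N]
  [Module S M] [Module S N]

theorem sdim_congr (e : M ≃ₗ[S] N) : SDim S M = SDim S N :=
  dev_eq_of_iso (Submodule.orderIsoMapComap e)

theorem exists_devLE (S : Type u) [Ring S] (M : Type u) [AddCommGroup M] [Module S M]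
    [IsNoetherian S M] : ∃ o, DevLE (Submodule S M) o := by
  by_contra hM
  set 𝒮 : Set (Submodule S M) := {P | ¬∃ o, DevLE (Submodule S (M ⧸ P)) o} with h𝒮
  have hbot : (⊥ : Submodule S M) ∈ 𝒮 := by
    intro hex
    exact hM (hasDev_of_embedding
      (Submodule.orderIsoMapComap (Submodule.quotEquivOfEqBot ⊥ rfl)).symm.toOrderEmbedding hex)
  have hwf : WellFounded ((· > ·) : Submodule S M → Submodule S M → Prop) := IsWellFounded.wf
  obtain ⟨Nmax, hNmem, hNmax⟩ := hwf.has_min 𝒮 ⟨⊥, hbot⟩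
  have hquot : ∀ P : Submodule S (M ⧸ Nmax), P ≠ ⊥ →
      ∃ o, DevLE (Submodule S ((M ⧸ Nmax) ⧸ P)) o := by
    intro P hP
    have hle : Nmax ≤ comap Nmax.mkQ P := by
      intro x hx
      have hx0 : Nmax.mkQ x = 0 := by
        rw [Submodule.mkQ_apply]; exact (Submodule.Quotient.mk_eq_zero _).mpr hx
      rw [mem_comap, hx0]; exact P.zero_mem
    have hPmap : map Nmax.mkQ (comap Nmax.mkQ P) = P :=
      Submodule.map_comap_eq_of_surjective (Submodule.mkQ_surjective _) P
    have hgt : comap Nmax.mkQ P > Nmax := by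
      rcases lt_or_eq_of_le hle with h | h
      · exact h
      · exfalso
        apply hP
        rw [← hPmap, ← h]
        apply le_bot_iff.mp
        intro y hy
        obtain ⟨x, hx, rfl⟩ := mem_map.mp hy
        have : Nmax.mkQ x = 0 := by
          rw [Submodule.mkQ_apply]; exact (Submodule.Quotient.mk_eq_zero _).mpr hx
        rw [this]; exact zero_mem ⊥
    have hnotin : comap Nmax.mkQ P ∉ 𝒮 := fun hmem => hNmax _ hmem hgt
    have hex : ∃ o, DevLE (Submodule S (M ⧸ comap Nmax.mkQ P)) o := not_not.mp hnotin
    have e := Submodule.quotientQuotientEquivQuotient Nmax (comap Nmax.mkQ P) hle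
    rw [hPmap] at e
    exact hasDev_of_embedding (Submodule.orderIsoMapComap e).toOrderEmbedding hex
  refine hNmem ⟨(⨆ P : {P : Submodule S (M ⧸ Nmax) // P ≠ ⊥},
      dev (Submodule S ((M ⧸ Nmax) ⧸ P.1))) + 1, ?_⟩
  rw [devLE_def]
  intro f hf
  have hchain : ∀ m n, m ≤ n → f n ≤ f m := by
    intro m n h
    induction h with
    | refl => exact le_rfl
    | step _ ih => exact (hf _).trans ih
  by_cases hz : ∃ n, f n = ⊥
  · obtain ⟨n₀, hn₀⟩ := hz
    refine ⟨n₀, fun n hn => Or.inl ?_⟩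
    have h1 : f n = ⊥ := le_bot_iff.mp (hn₀ ▸ hchain n₀ n hn)
    have h2 : f (n+1) = ⊥ := le_bot_iff.mp (hn₀ ▸ hchain n₀ (n+1) (hn.trans (Nat.le_succ n)))
    rw [h1, h2]
  · push_neg at hz
    refine ⟨0, fun n _ => Or.inr ?_⟩
    have hP := hquot (f (n+1)) (hz (n+1))
    refine ⟨⟨dev (Submodule S ((M ⧸ Nmax) ⧸ f (n+1))), ?_⟩, ?_⟩
    · rw [Ordinal.add_one_eq_succ]
      refine Order.lt_succ_of_le ?_
      exact le_ciSup (Ordinal.bddAbove_range _) (⟨f (n+1), hz (n+1)⟩ :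
        {P : Submodule S (M ⧸ Nmax) // P ≠ ⊥})
    · refine DevLE.of_embedding _ ?_ (devLE_dev hP)
      exact (OrderEmbedding.ofMapLEIff (fun y => (⟨y.1, y.2.1⟩ : {q // f (n+1) ≤ q}))
        (fun _ _ => Iff.rfl)).trans
        (Submodule.comapMkQRelIso (f (n+1))).symm.toOrderEmbedding

theorem sdim_eq_ideal (p : Submodule S M) :
    dev {q : Submodule S M // q ≤ p} = SDim S ↥p :=
  dev_eq_of_iso (Submodule.MapSubtype.orderIso p).symm

theorem sdim_le_of_injective (f : M →ₗ[S] N) (hf : Function.Injective f) [IsNoetherian S N] :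
    SDim S M ≤ SDim S N :=
  dev_le_of_embedding (OrderEmbedding.ofMapLEIff (fun p => Submodule.map f p)
    (fun p q => Submodule.map_le_map_iff_of_injective (f := f) hf p q)) (exists_devLE S N)

theorem sdim_le_of_surjective (f : M →ₗ[S] N) (hf : Function.Surjective f) [IsNoetherian S M] :
    SDim S N ≤ SDim S M :=
  dev_le_of_embedding (OrderEmbedding.ofMapLEIff (Submodule.comap f)
    (fun p q => ⟨fun h => by
      have h2 : Submodule.map f (Submodule.comap f p) ≤ Submodule.map f (Submodule.comap f q) :=
        Submodule.map_mono h
      rwa [Submodule.map_comap_eq_of_surjective hf, Submodule.map_comap_eq_of_surjective hf]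
        at h2, fun h => Submodule.comap_mono h⟩)) (exists_devLE S M)

theorem sdim_sub_le (p : Submodule S M) [IsNoetherian S M] : SDim S ↥p ≤ SDim S M :=
  sdim_le_of_injective p.subtype (Submodule.injective_subtype p)

theorem sdim_quot_le (p : Submodule S M) [IsNoetherian S M] : SDim S (M ⧸ p) ≤ SDim S M :=
  sdim_le_of_surjective p.mkQ (Submodule.mkQ_surjective p)

theorem sdim_split (p : Submodule S M) [IsNoetherian S M] :
    SDim S M ≤ max (SDim S ↥p) (SDim S (M ⧸ p)) := by
  refine dev_le (devLE_of_split _ p ?_ ?_)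
  · exact DevLE.of_embedding _ (Submodule.MapSubtype.orderIso p).symm.toOrderEmbedding
      ((devLE_dev (exists_devLE S ↥p)).mono (le_max_left _ _))
  · exact DevLE.of_embedding _ (Submodule.comapMkQRelIso p).symm.toOrderEmbedding
      ((devLE_dev (exists_devLE S (M ⧸ p))).mono (le_max_right _ _))

theorem sdim_map_le (f : M →ₗ[S] N) (p : Submodule S M) [IsNoetherian S M] :
    SDim S ↥(Submodule.map f p) ≤ SDim S ↥p := by
  have hres : ∀ x ∈ p, f x ∈ Submodule.map f p := fun x hx => Submodule.mem_map_of_mem hx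
  refine sdim_le_of_surjective (f.restrict hres) ?_
  rintro ⟨y, hy⟩
  obtain ⟨x, hx, rfl⟩ := Submodule.mem_map.mp hy
  exact ⟨⟨x, hx⟩, rfl⟩

theorem sdim_prod_le [IsNoetherian S M] [IsNoetherian S N] :
    SDim S (M × N) ≤ max (SDim S M) (SDim S N) := by
  have hsnd : Function.Surjective (LinearMap.snd S M N) := fun n => ⟨(0, n), rfl⟩
  have eker : ↥(LinearMap.ker (LinearMap.snd S M N)) ≃ₗ[S] M :=
    { toFun := fun x => x.1.1
      map_add' := fun x y => rfl
      map_smul' := fun c x => rfl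
      invFun := fun m => ⟨(m, 0), by simp [LinearMap.mem_ker]⟩
      left_inv := fun x => Subtype.ext (Prod.ext rfl (by
        have h := LinearMap.mem_ker.mp x.2
        simp only [LinearMap.snd_apply] at h
        exact h.symm))
      right_inv := fun m => rfl }
  have h := sdim_split (S := S) (M := M × N) (LinearMap.ker (LinearMap.snd S M N))
  refine h.trans (max_le_max (le_of_eq (sdim_congr eker))
    (le_of_eq (sdim_congr (LinearMap.quotKerEquivOfSurjective _ hsnd))))

theorem sdim_pi_le (k : ℕ) (M : Type u) [AddCommGroup M] [Module S M] [IsNoetherian S M] :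
    SDim S (Fin k → M) ≤ SDim S M := by
  induction k with
  | zero =>
    haveI h0 : Subsingleton (Fin 0 → M) := ⟨fun a b => funext fun i => i.elim0⟩
    haveI : Subsingleton (Submodule S (Fin 0 → M)) := ⟨fun a b => by
      have hb : ∀ c : Submodule S (Fin 0 → M), c = ⊥ := by
        intro c
        apply le_bot_iff.mp
        intro x _
        exact (Submodule.mem_bot S).mpr (Subsingleton.elim x 0)
      rw [hb a, hb b]⟩
    exact le_trans (dev_le (devLE_of_subsingleton 0)) (zero_le (a := _))
  | succ k ih =>
    have e : (Fin (k+1) → M) ≃ₗ[S] M × (Fin k → M) :=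
      { toFun := fun g => (g 0, fun i => g i.succ)
        map_add' := fun a b => rfl
        map_smul' := fun c a => rfl
        invFun := fun p => Fin.cons p.1 p.2
        left_inv := fun g => by
          funext i
          refine Fin.cases ?_ ?_ i <;> simp
        right_inv := fun p => by
          refine Prod.ext ?_ ?_ <;> simp }
    calc SDim S (Fin (k+1) → M) = SDim S (M × (Fin k → M)) := sdim_congr e
      _ ≤ max (SDim S M) (SDim S (Fin k → M)) := sdim_prod_le
      _ ≤ SDim S M := max_le le_rfl ih

theorem sdim_sup_le (p q : Submodule S M) [IsNoetherian S M] :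
    SDim S ↥(p ⊔ q) ≤ max (SDim S ↥p) (SDim S ↥q) := by
  have h := sdim_split (S := S) (M := ↥(p ⊔ q)) (Submodule.comap (p ⊔ q).subtype q)
  refine h.trans (max_le ?_ ?_)
  · exact le_trans (le_of_eq (sdim_congr (Submodule.comapSubtypeEquivOfLe le_sup_right)))
      (le_max_right _ _)
  · refine le_trans (le_of_eq (sdim_congr
      (LinearMap.quotientInfEquivSupQuotient p q).symm)) ?_
    exact le_trans (sdim_quot_le _) (le_max_left _ _)

end ModuleDim

section RingPlumb

def OrderIso.restrictLe {X Y : Type u} [Preorder X] [Preorder Y] (e : X ≃o Y) (a : X) :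
    {x // x ≤ a} ≃o {y // y ≤ e a} where
  toFun x := ⟨e x.1, e.monotone x.2⟩
  invFun y := ⟨e.symm y.1, (e.symm.monotone y.2).trans_eq (e.symm_apply_apply a)⟩
  left_inv x := Subtype.ext (e.symm_apply_apply _)
  right_inv y := Subtype.ext (e.apply_symm_apply _)
  map_rel_iff' {a b} := by simpa using e.le_iff_le (a := a.1) (b := b.1)

def opSelfEquiv (R : Type u) [Ring R] : Rᵐᵒᵖ ≃ₗ[Rᵐᵒᵖ] R where
  toFun := MulOpposite.unop
  invFun := MulOpposite.op
  map_add' _ _ := rfl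
  map_smul' _ _ := rfl
  left_inv _ := rfl
  right_inv _ := rfl

theorem isNoetherian_op (R : Type u) [Ring R] [IsNoetherianRing Rᵐᵒᵖ] :
    IsNoetherian Rᵐᵒᵖ R :=
  isNoetherian_of_linearEquiv (opSelfEquiv R)

variable {R : Type u} [Ring R] (B : TwoSidedIdeal R)

theorem quotSurj : ∀ x : B.ringCon.Quotient, ∃ r : R, (r : B.ringCon.Quotient) = x :=
  fun x => Quot.exists_rep x

theorem coe_bridge_l (r s : R) : (r : B.ringCon.Quotient) = s ↔
    (Submodule.Quotient.mk r : R ⧸ leftIdealOf B) = Submodule.Quotient.mk s := by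
  rw [RingCon.eq, B.rel_iff, Submodule.Quotient.eq]
  exact Iff.rfl

theorem coe_bridge_r (r s : R) : (r : B.ringCon.Quotient) = s ↔
    (Submodule.Quotient.mk r : R ⧸ rightIdealOf B) = Submodule.Quotient.mk s := by
  rw [RingCon.eq, B.rel_iff, Submodule.Quotient.eq]
  exact Iff.rfl

/-- Left ideals of the quotient ring correspond to left ideals of `R ⧸ B` as a module. -/
noncomputable def quotLeftIso :
    Submodule B.ringCon.Quotient B.ringCon.Quotient ≃o Submodule R (R ⧸ leftIdealOf B) where
  toFun I' :=
    { carrier := {x | ∃ r : R, Submodule.Quotient.mk r = x ∧ (r : B.ringCon.Quotient) ∈ I'}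
      zero_mem' := ⟨0, rfl, by
        rw [show ((0 : R) : B.ringCon.Quotient) = 0 from rfl]; exact I'.zero_mem⟩
      add_mem' := by
        rintro a b ⟨r, hr, hrI⟩ ⟨s, hs, hsI⟩
        refine ⟨r + s, by rw [← hr, ← hs, Submodule.Quotient.mk_add], ?_⟩
        rw [RingCon.coe_add]
        exact I'.add_mem hrI hsI
      smul_mem' := by
        rintro c x ⟨r, hr, hrI⟩
        refine ⟨c * r, ?_, ?_⟩
        · rw [← hr, ← smul_eq_mul, ← Submodule.mkQ_apply, ← Submodule.mkQ_apply,
            LinearMap.map_smul]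
        · rw [RingCon.coe_mul]
          have := I'.smul_mem (c : B.ringCon.Quotient) hrI
          rwa [smul_eq_mul] at this }
  invFun J :=
    { carrier := {xq | ∃ r : R, (r : B.ringCon.Quotient) = xq ∧ Submodule.Quotient.mk r ∈ J}
      zero_mem' := ⟨0, rfl, by
        rw [show (Submodule.Quotient.mk (0:R) : R ⧸ leftIdealOf B) = 0 from rfl]
        exact J.zero_mem⟩
      add_mem' := by
        rintro a b ⟨r, hr, hrJ⟩ ⟨s, hs, hsJ⟩
        refine ⟨r + s, by rw [← hr, ← hs, RingCon.coe_add], ?_⟩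
        rw [Submodule.Quotient.mk_add]
        exact J.add_mem hrJ hsJ
      smul_mem' := by
        rintro cq xq ⟨r, hr, hrJ⟩
        obtain ⟨c, rfl⟩ := quotSurj B cq
        refine ⟨c * r, ?_, ?_⟩
        · rw [← hr, smul_eq_mul, RingCon.coe_mul]
        · have : (Submodule.Quotient.mk (c * r) : R ⧸ leftIdealOf B) =
              c • Submodule.Quotient.mk r := by
            rw [← smul_eq_mul, ← Submodule.mkQ_apply, ← Submodule.mkQ_apply,
              LinearMap.map_smul]
          rw [this]
          exact J.smul_mem c hrJ }
  left_inv I' := by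
    ext xq
    constructor
    · rintro ⟨r, hr, s, hs, hsI⟩
      rw [← hr, ← (coe_bridge_l B s r).mpr hs]
      exact hsI
    · intro hx
      obtain ⟨r, rfl⟩ := quotSurj B xq
      exact ⟨r, rfl, r, rfl, hx⟩
  right_inv J := by
    ext x
    constructor
    · rintro ⟨r, hr, s, hs, hsJ⟩
      rw [← hr, ← (coe_bridge_l B s r).mp hs]
      exact hsJ
    · intro hx
      obtain ⟨r, rfl⟩ := Submodule.Quotient.mk_surjective _ x
      exact ⟨r, rfl, r, rfl, hx⟩
  map_rel_iff' {I₁ I₂} := by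
    constructor
    · intro h xq hx
      obtain ⟨r, rfl⟩ := quotSurj B xq
      obtain ⟨s, hs, hsI⟩ := h ⟨r, rfl, hx⟩
      rw [← (coe_bridge_l B s r).mpr hs]
      exact hsI
    · rintro h x ⟨r, hr, hrI⟩
      exact ⟨r, hr, h hrI⟩

/-- Right ideals of the quotient ring correspond to `Rᵐᵒᵖ`-submodules of `R ⧸ B`. -/
noncomputable def quotRightIso :
    Submodule (B.ringCon.Quotient)ᵐᵒᵖ B.ringCon.Quotient ≃o
      Submodule Rᵐᵒᵖ (R ⧸ rightIdealOf B) where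
  toFun I' :=
    { carrier := {x | ∃ r : R, Submodule.Quotient.mk r = x ∧ (r : B.ringCon.Quotient) ∈ I'}
      zero_mem' := ⟨0, rfl, by
        rw [show ((0 : R) : B.ringCon.Quotient) = 0 from rfl]; exact I'.zero_mem⟩
      add_mem' := by
        rintro a b ⟨r, hr, hrI⟩ ⟨s, hs, hsI⟩
        refine ⟨r + s, by rw [← hr, ← hs, Submodule.Quotient.mk_add], ?_⟩
        rw [RingCon.coe_add]
        exact I'.add_mem hrI hsI
      smul_mem' := by
        rintro c x ⟨r, hr, hrI⟩
        refine ⟨r * c.unop, ?_, ?_⟩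
        · rw [← hr, ← Submodule.mkQ_apply, ← Submodule.mkQ_apply, ← LinearMap.map_smul]
          rfl
        · rw [RingCon.coe_mul]
          have := I'.smul_mem (MulOpposite.op ((c.unop : R) : B.ringCon.Quotient)) hrI
          rwa [MulOpposite.smul_eq_mul_unop, MulOpposite.unop_op] at this }
  invFun J :=
    { carrier := {xq | ∃ r : R, (r : B.ringCon.Quotient) = xq ∧ Submodule.Quotient.mk r ∈ J}
      zero_mem' := ⟨0, rfl, by
        rw [show (Submodule.Quotient.mk (0:R) : R ⧸ rightIdealOf B) = 0 from rfl]
        exact J.zero_mem⟩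
      add_mem' := by
        rintro a b ⟨r, hr, hrJ⟩ ⟨s, hs, hsJ⟩
        refine ⟨r + s, by rw [← hr, ← hs, RingCon.coe_add], ?_⟩
        rw [Submodule.Quotient.mk_add]
        exact J.add_mem hrJ hsJ
      smul_mem' := by
        rintro cq xq ⟨r, hr, hrJ⟩
        obtain ⟨c, hc⟩ := quotSurj B cq.unop
        refine ⟨r * c, ?_, ?_⟩
        · rw [← hr, RingCon.coe_mul, hc, MulOpposite.smul_eq_mul_unop]
        · have : (Submodule.Quotient.mk (r * c) : R ⧸ rightIdealOf B) =
              (MulOpposite.op c) • Submodule.Quotient.mk r := by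
            rw [← Submodule.mkQ_apply, ← Submodule.mkQ_apply, ← LinearMap.map_smul]
            rfl
          rw [this]
          exact J.smul_mem (MulOpposite.op c) hrJ }
  left_inv I' := by
    ext xq
    constructor
    · rintro ⟨r, hr, s, hs, hsI⟩
      rw [← hr, ← (coe_bridge_r B s r).mpr hs]
      exact hsI
    · intro hx
      obtain ⟨r, rfl⟩ := quotSurj B xq
      exact ⟨r, rfl, r, rfl, hx⟩
  right_inv J := by
    ext x
    constructor
    · rintro ⟨r, hr, s, hs, hsJ⟩
      rw [← hr, ← (coe_bridge_r B s r).mp hs]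
      exact hsJ
    · intro hx
      obtain ⟨r, rfl⟩ := Submodule.Quotient.mk_surjective _ x
      exact ⟨r, rfl, r, rfl, hx⟩
  map_rel_iff' {I₁ I₂} := by
    constructor
    · intro h xq hx
      obtain ⟨r, rfl⟩ := quotSurj B xq
      obtain ⟨s, hs, hsI⟩ := h ⟨r, rfl, hx⟩
      rw [← (coe_bridge_r B s r).mpr hs]
      exact hsI
    · rintro h x ⟨r, hr, hrI⟩
      exact ⟨r, hr, h hrI⟩

end RingPlumb

section MainAux
open Submodule

theorem lIdealDim_eq_sdim {R : Type u} [Ring R] (J : Submodule R R) :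
    lIdealDim R J = SDim R ↥J := sdim_eq_ideal J

theorem rIdealDim_eq_sdim {R : Type u} [Ring R] (J : Submodule Rᵐᵒᵖ R) :
    rIdealDim R J = SDim Rᵐᵒᵖ ↥J := sdim_eq_ideal J

theorem lIdealDim_top (R : Type u) [Ring R] : lIdealDim R ⊤ = lKdim R := by
  rw [lIdealDim_eq_sdim]
  exact sdim_congr Submodule.topEquiv

end MainAux

/-- If `R` is Noetherian and right Krull-homogeneous and `B` is the largest
left ideal with `|B|_l < |R|_l`, then `R/B` is left and right Krull-homogeneous with
`|R/B|_r = |R|_r` and `|R/B|_l = |R|_l`. -/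
theorem stmt5 (R : Type u) [Ring R] [IsNoetherianRing R] [IsNoetherianRing Rᵐᵒᵖ]
    (hKH : RightKH R) (B : TwoSidedIdeal R)
    (h1 : lIdealDim R (leftIdealOf B) < lKdim R)
    (h2 : ∀ K : Submodule R R, lIdealDim R K < lKdim R → K ≤ leftIdealOf B) :
    RightKH B.ringCon.Quotient ∧ LeftKH B.ringCon.Quotient ∧
      rKdimQ B = rKdim R ∧ lKdimQ B = lKdim R := by
  open Submodule in
  haveI hNO : IsNoetherian Rᵐᵒᵖ R := isNoetherian_op R
  set Bl := leftIdealOf B with hBldef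
  set Br := rightIdealOf B with hBrdef
  -- B is proper
  have hBproper : (1 : R) ∉ B := by
    intro h1B
    have htop : Bl = ⊤ := by
      rw [eq_top_iff]
      intro x _
      exact (by simpa using B.mul_mem_left x 1 h1B : x ∈ B)
    rw [htop, lIdealDim_top] at h1
    exact lt_irrefl _ h1
  have hBl_lt : SDim R ↥Bl < lKdim R := by
    rw [← lIdealDim_eq_sdim]; exact h1
  ------------------------------------------------------------------
  -- LEFT SIDE
  ------------------------------------------------------------------
  have hQl_le : SDim R (R ⧸ Bl) ≤ lKdim R := sdim_quot_le Bl
  have hQl_ge : lKdim R ≤ SDim R (R ⧸ Bl) := by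
    by_contra hlt
    push_neg at hlt
    have hs : lKdim R ≤ max (SDim R ↥Bl) (SDim R (R ⧸ Bl)) := sdim_split Bl
    exact absurd (lt_of_le_of_lt hs (max_lt hBl_lt hlt)) (lt_irrefl _)
  have hQl : SDim R (R ⧸ Bl) = lKdim R := le_antisymm hQl_le hQl_ge
  have hlKdimQ : lKdimQ B = lKdim R := by
    calc lKdimQ B = dev (Submodule B.ringCon.Quotient B.ringCon.Quotient) := rfl
      _ = dev (Submodule R (R ⧸ Bl)) := dev_eq_of_iso (quotLeftIso B)
      _ = lKdim R := hQl
  have hLKH : LeftKH B.ringCon.Quotient := by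
    intro K' hK'
    set P := quotLeftIso B K' with hPdef
    have hPne : P ≠ ⊥ := by
      intro h
      apply hK'
      have h2' := congrArg (quotLeftIso B).symm h
      rw [OrderIso.symm_apply_apply] at h2'
      rw [h2']
      exact OrderIso.map_bot _
    have hdim : lIdealDim B.ringCon.Quotient K' = SDim R ↥P := by
      calc lIdealDim B.ringCon.Quotient K'
          = dev {Q' : Submodule R (R ⧸ Bl) // Q' ≤ P} :=
            dev_eq_of_iso ((quotLeftIso B).restrictLe K')
        _ = SDim R ↥P := sdim_eq_ideal P
    have hPle : SDim R ↥P ≤ lKdim R := le_trans (sdim_sub_le P) hQl_le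
    have hPge : lKdim R ≤ SDim R ↥P := by
      by_contra hlt
      push_neg at hlt
      set X := comap Bl.mkQ P with hXdef
      have hBlX : Bl ≤ X := by
        intro x hx
        have hx0 : Bl.mkQ x = 0 := by
          rw [mkQ_apply]; exact (Submodule.Quotient.mk_eq_zero _).mpr hx
        rw [mem_comap, hx0]
        exact P.zero_mem
      have hmapX : map Bl.mkQ X = P :=
        map_comap_eq_of_surjective (mkQ_surjective _) P
      have hsplitX := sdim_split (S := R) (M := ↥X) (comap X.subtype Bl)
      have hlow : SDim R ↥(comap X.subtype Bl) = SDim R ↥Bl :=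
        sdim_congr (comapSubtypeEquivOfLe hBlX)
      have hup : SDim R (↥X ⧸ comap X.subtype Bl) = SDim R ↥P := by
        have e1 := LinearMap.quotKerEquivRange (Bl.mkQ.comp X.subtype)
        have hker : LinearMap.ker (Bl.mkQ.comp X.subtype) = comap X.subtype Bl := by
          rw [LinearMap.ker_comp, ker_mkQ]
        have hrange : LinearMap.range (Bl.mkQ.comp X.subtype) = P := by
          rw [LinearMap.range_comp, range_subtype, hmapX]
        rw [hker, hrange] at e1
        exact sdim_congr e1
      have hXlt : lIdealDim R X < lKdim R := by
        rw [lIdealDim_eq_sdim]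
        refine lt_of_le_of_lt hsplitX (max_lt ?_ ?_)
        · rw [hlow]; exact hBl_lt
        · rw [hup]; exact hlt
      have hXB := h2 X hXlt
      apply hPne
      rw [← hmapX]
      apply le_bot_iff.mp
      intro y hy
      obtain ⟨x, hxX, rfl⟩ := mem_map.mp hy
      have hxB : x ∈ Bl := hXB hxX
      have h0 : Bl.mkQ x = 0 := by
        rw [mkQ_apply]; exact (Submodule.Quotient.mk_eq_zero _).mpr hxB
      rw [h0]
      exact zero_mem ⊥
    rw [hdim, le_antisymm hPle hPge]
    exact hlKdimQ.symm
  ------------------------------------------------------------------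
  -- RIGHT SIDE
  ------------------------------------------------------------------
  have hQr_le : SDim Rᵐᵒᵖ (R ⧸ Br) ≤ rKdim R := sdim_quot_le Br
  set TS : Set (Submodule Rᵐᵒᵖ (R ⧸ Br)) :=
    {P | P = ⊥ ∨ SDim Rᵐᵒᵖ ↥P < rKdim R} with hTSdef
  have hwf : WellFounded
      ((· > ·) : Submodule Rᵐᵒᵖ (R ⧸ Br) → Submodule Rᵐᵒᵖ (R ⧸ Br) → Prop) :=
    IsWellFounded.wf
  obtain ⟨Tb, hTbmem, hTbmax⟩ := hwf.has_min TS ⟨⊥, Or.inl rfl⟩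
  have habsorb : ∀ P ∈ TS, P ≤ Tb := by
    intro P hPmem
    have hsupmem : P ⊔ Tb ∈ TS := by
      rcases hPmem with h | h
      · rw [h, bot_sup_eq]; exact hTbmem
      · rcases hTbmem with h' | h'
        · rw [h', sup_bot_eq]; exact Or.inr h
        · exact Or.inr (lt_of_le_of_lt (sdim_sup_le P Tb) (max_lt h h'))
    have hnot : ¬ (P ⊔ Tb > Tb) := hTbmax _ hsupmem
    have he : P ⊔ Tb = Tb := by
      rcases lt_or_eq_of_le (le_sup_right : Tb ≤ P ⊔ Tb) with hlt | heq
      · exact absurd hlt hnot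
      · exact heq.symm
    exact le_trans le_sup_left (le_of_eq he)
  have hTbbot : Tb = ⊥ := by
    by_contra hTne
    have hTbsmall : SDim Rᵐᵒᵖ ↥Tb < rKdim R := hTbmem.resolve_left hTne
    set T : Submodule Rᵐᵒᵖ R := comap Br.mkQ Tb with hTdef
    have hBrT : Br ≤ T := by
      intro x hx
      rw [mem_comap]
      have hx0 : Br.mkQ x = 0 := by
        rw [mkQ_apply]; exact (Submodule.Quotient.mk_eq_zero _).mpr hx
      rw [hx0]; exact Tb.zero_mem
    have hmapT : map Br.mkQ T = Tb :=
      map_comap_eq_of_surjective (mkQ_surjective _) _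
    have hTneB : ∃ t, t ∈ T ∧ t ∉ B := by
      by_contra hc
      push_neg at hc
      apply hTne
      rw [← hmapT]
      apply le_bot_iff.mp
      intro y hy
      obtain ⟨x, hxT, rfl⟩ := mem_map.mp hy
      have hxB : x ∈ Br := hc x hxT
      have h0 : Br.mkQ x = 0 := by
        rw [mkQ_apply]; exact (Submodule.Quotient.mk_eq_zero _).mpr hxB
      rw [h0]; exact zero_mem ⊥
    -- two-sidedness of T
    have htwo : ∀ (r x : R), x ∈ T → r * x ∈ T := by
      intro r x hx
      set ell : R →ₗ[Rᵐᵒᵖ] R :=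
        { toFun := fun y => r * y
          map_add' := fun a b => mul_add r a b
          map_smul' := by
            intro c y
            show r * (c • y) = c • (r * y)
            rw [MulOpposite.smul_eq_mul_unop, MulOpposite.smul_eq_mul_unop, ← mul_assoc] } with helldef
      have hbar : Br ≤ comap ell Br := by
        intro b hb
        show r * b ∈ Br
        exact B.mul_mem_left r b hb
      have hmem : map (Br.mapQ Br ell hbar) Tb ∈ TS :=
        Or.inr (lt_of_le_of_lt (sdim_map_le (Br.mapQ Br ell hbar) Tb) hTbsmall)
      have hsub := habsorb _ hmem
      rw [mem_comap] at hx ⊢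
      have heq : Br.mkQ (r * x) = (Br.mapQ Br ell hbar) (Br.mkQ x) := by
        rw [mkQ_apply, mkQ_apply, mapQ_apply]
        rfl
      rw [heq]
      exact hsub (mem_map_of_mem hx)
    set Tl : Submodule R R :=
      { carrier := (T : Set R)
        add_mem' := fun ha hb => T.add_mem ha hb
        zero_mem' := T.zero_mem
        smul_mem' := fun r x hx => htwo r x hx } with hTldef
    obtain ⟨k, tv, htv⟩ := Submodule.fg_iff_exists_fin_generating_family.mp
      (IsNoetherian.noetherian Tl)
    have htvT : ∀ i, tv i ∈ T := by
      intro i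
      show tv i ∈ Tl
      rw [← htv]
      exact subset_span (Set.mem_range_self i)
    set A : Submodule Rᵐᵒᵖ R :=
      { carrier := {a | ∀ x ∈ T, x * a ∈ B}
        add_mem' := fun {a b} ha hb x hx => by
          rw [mul_add]; exact B.add_mem (ha x hx) (hb x hx)
        zero_mem' := fun x hx => by rw [mul_zero]; exact B.zero_mem
        smul_mem' := fun c a ha x hx => by
          rw [MulOpposite.smul_eq_mul_unop, ← mul_assoc]
          exact B.mul_mem_right _ _ (ha x hx) } with hAdef
    have hAmem : ∀ a : R, a ∈ A ↔ ∀ x ∈ T, x * a ∈ B := fun a => Iff.rfl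
    have hAleft : ∀ (r : R) {a : R}, a ∈ A → r * a ∈ A := by
      intro r a ha x hx
      have hxr : x * r ∈ T := by
        have := T.smul_mem (MulOpposite.op r) hx
        rwa [MulOpposite.smul_eq_mul_unop, MulOpposite.unop_op] at this
      rw [← mul_assoc]
      exact ha (x * r) hxr
    have hA_iff : ∀ a : R, a ∈ A ↔ ∀ i : Fin k, tv i * a ∈ B := by
      intro a
      constructor
      · intro ha i
        exact ha (tv i) (htvT i)
      · intro h x hx
        have hx' : x ∈ span R (Set.range tv) := by
          rw [htv]; exact hx
        refine Submodule.span_induction (p := fun y _ => y * a ∈ B) ?_ ?_ ?_ ?_ hx'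
        · rintro y ⟨i, rfl⟩; exact h i
        · show (0 : R) * a ∈ B
          rw [zero_mul]; exact B.zero_mem
        · intro y z _ _ hy hz
          show (y + z) * a ∈ B
          rw [add_mul]; exact B.add_mem hy hz
        · intro c y _ hy
          show (c • y) * a ∈ B
          rw [smul_eq_mul, mul_assoc]
          exact B.mul_mem_left c _ hy
    have hBrA : Br ≤ A := fun b hb x _ => B.mul_mem_left x b hb
    -- ψ and smallness of R ⧸ A
    set psi : R →ₗ[Rᵐᵒᵖ] (Fin k → ↥Tb) :=
      { toFun := fun x => fun i => ⟨Br.mkQ (tv i * x), by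
          have hmemT : tv i * x ∈ T := by
            have := T.smul_mem (MulOpposite.op x) (htvT i)
            rwa [MulOpposite.smul_eq_mul_unop, MulOpposite.unop_op] at this
          rw [← hmapT]
          exact mem_map_of_mem hmemT⟩
        map_add' := by
          intro a b
          funext i
          apply Subtype.ext
          show Br.mkQ (tv i * (a + b)) = Br.mkQ (tv i * a) + Br.mkQ (tv i * b)
          rw [mul_add, map_add]
        map_smul' := by
          intro c a
          funext i
          apply Subtype.ext
          show Br.mkQ (tv i * (c • a)) = c • Br.mkQ (tv i * a)
          rw [MulOpposite.smul_eq_mul_unop, ← mul_assoc,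
            ← MulOpposite.smul_eq_mul_unop (a := c), map_smul] } with hpsidef
    have hkerpsi : LinearMap.ker psi = A := by
      ext a
      rw [LinearMap.mem_ker]
      constructor
      · intro h
        rw [hA_iff]
        intro i
        have hcomp : psi a i = 0 := by rw [h]; rfl
        have hval : Br.mkQ (tv i * a) = 0 := congrArg Subtype.val hcomp
        rwa [mkQ_apply, Submodule.Quotient.mk_eq_zero] at hval
      · intro ha
        funext i
        apply Subtype.ext
        show Br.mkQ (tv i * a) = 0
        rw [mkQ_apply]
        exact (Submodule.Quotient.mk_eq_zero _).mpr ((hA_iff a).mp ha i)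
    have hsmallQA : SDim Rᵐᵒᵖ (R ⧸ A) < rKdim R := by
      have hinj : Function.Injective (A.liftQ psi (le_of_eq hkerpsi.symm)) := by
        rw [← LinearMap.ker_eq_bot]
        exact Submodule.ker_liftQ_eq_bot A psi _ (le_of_eq hkerpsi)
      calc SDim Rᵐᵒᵖ (R ⧸ A) ≤ SDim Rᵐᵒᵖ (Fin k → ↥Tb) := sdim_le_of_injective _ hinj
        _ ≤ SDim Rᵐᵒᵖ ↥Tb := sdim_pi_le k ↥Tb
        _ < rKdim R := hTbsmall
    set lA : Submodule R R :=
      { carrier := {x | ∀ a ∈ A, x * a = 0}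
        add_mem' := fun {x y} hx hy a ha => by rw [add_mul, hx a ha, hy a ha, add_zero]
        zero_mem' := fun a _ => zero_mul a
        smul_mem' := fun r x hx a ha => by
          show (r * x) * a = 0
          rw [mul_assoc, hx a ha, mul_zero] } with hlAdef
    by_cases hlAbot : lA = ⊥
    · -- K₀ case: T would be inside B
      set K0 : Submodule R R :=
        { carrier := {x | ∀ a ∈ A, x * a ∈ B}
          add_mem' := fun {x y} hx hy a ha => by
            rw [add_mul]; exact B.add_mem (hx a ha) (hy a ha)
          zero_mem' := fun a _ => by rw [zero_mul]; exact B.zero_mem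
          smul_mem' := fun r x hx a ha => by
            show (r * x) * a ∈ B
            rw [mul_assoc]
            exact B.mul_mem_left r _ (hx a ha) } with hK0def
      obtain ⟨m, av, hav⟩ := Submodule.fg_iff_exists_fin_generating_family.mp
        (IsNoetherian.noetherian A)
      have havA : ∀ j, av j ∈ A := by
        intro j
        rw [← hav]
        exact subset_span (Set.mem_range_self j)
      set chi : ↥K0 →ₗ[R] (Fin m → ↥Bl) :=
        { toFun := fun x => fun j => ⟨x.1 * av j, x.2 (av j) (havA j)⟩
          map_add' := by
            intro x y
            funext j
            exact Subtype.ext (add_mul _ _ _)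
          map_smul' := by
            intro r x
            funext j
            apply Subtype.ext
            show (r • x.1) * av j = r • (x.1 * av j)
            rw [smul_eq_mul, smul_eq_mul, mul_assoc] } with hchidef
      have hchiinj : Function.Injective chi := by
        rw [← LinearMap.ker_eq_bot]
        apply le_bot_iff.mp
        intro x hx
        rw [LinearMap.mem_ker] at hx
        have hall : ∀ a ∈ A, x.1 * a = 0 := by
          intro a ha
          have ha' : a ∈ span Rᵐᵒᵖ (Set.range av) := by rw [hav]; exact ha
          refine Submodule.span_induction (p := fun y _ => x.1 * y = 0) ?_ ?_ ?_ ?_ ha'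
          · rintro y ⟨j, rfl⟩
            have hcomp : chi x j = 0 := by rw [hx]; rfl
            exact congrArg Subtype.val hcomp
          · exact mul_zero _
          · intro y z _ _ hy hz
            show x.1 * (y + z) = 0
            rw [mul_add, hy, hz, add_zero]
          · intro c y _ hy
            show x.1 * (c • y) = 0
            rw [MulOpposite.smul_eq_mul_unop, ← mul_assoc, hy, zero_mul]
        have hxlA : x.1 ∈ lA := hall
        rw [hlAbot] at hxlA
        have : x.1 = 0 := hxlA
        exact Subtype.ext this
      have hK0dim : lIdealDim R K0 < lKdim R := by
        rw [lIdealDim_eq_sdim]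
        calc SDim R ↥K0 ≤ SDim R (Fin m → ↥Bl) := sdim_le_of_injective chi hchiinj
          _ ≤ SDim R ↥Bl := sdim_pi_le m ↥Bl
          _ < lKdim R := hBl_lt
      have hK0B := h2 K0 hK0dim
      obtain ⟨t0, ht0T, ht0B⟩ := hTneB
      exact ht0B (hK0B (show t0 ∈ K0 from fun a ha => ha t0 ht0T))
    · -- Z case: a nonzero right ideal killed by A
      set Z : Submodule Rᵐᵒᵖ R :=
        { carrier := {x | ∀ a ∈ A, x * a = 0}
          add_mem' := fun {x y} hx hy a ha => by rw [add_mul, hx a ha, hy a ha, add_zero]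
          zero_mem' := fun a _ => zero_mul a
          smul_mem' := fun c x hx a ha => by
            rw [MulOpposite.smul_eq_mul_unop, mul_assoc]
            exact hx (c.unop * a) (hAleft c.unop ha) } with hZdef
      have hZne : Z ≠ ⊥ := by
        intro h
        apply hlAbot
        apply le_bot_iff.mp
        intro x hx
        have hxZ : x ∈ Z := hx
        rw [h] at hxZ
        exact hxZ
      have hZdim : rIdealDim R Z = rKdim R := hKH Z hZne
      obtain ⟨p, zv, hzv⟩ := Submodule.fg_iff_exists_fin_generating_family.mp
        (IsNoetherian.noetherian Z)
      have hzvZ : ∀ j, zv j ∈ Z := by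
        intro j
        rw [← hzv]
        exact subset_span (Set.mem_range_self j)
      have hcompmem : ∀ (j : Fin p) (x : R), zv j * x ∈ Z := by
        intro j x
        have := Z.smul_mem (MulOpposite.op x) (hzvZ j)
        rwa [MulOpposite.smul_eq_mul_unop, MulOpposite.unop_op] at this
      set comp0 : Fin p → (R →ₗ[Rᵐᵒᵖ] ↥Z) := fun j =>
        { toFun := fun x => ⟨zv j * x, hcompmem j x⟩
          map_add' := by
            intro a b
            apply Subtype.ext
            show zv j * (a + b) = zv j * a + zv j * b
            rw [mul_add]
          map_smul' := by
            intro c a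
            apply Subtype.ext
            show zv j * (c • a) = c • (zv j * a)
            rw [MulOpposite.smul_eq_mul_unop, MulOpposite.smul_eq_mul_unop, ← mul_assoc] }
        with hcomp0def
      have hcompker : ∀ j, A ≤ LinearMap.ker (comp0 j) := by
        intro j a ha
        rw [LinearMap.mem_ker]
        apply Subtype.ext
        show zv j * a = 0
        exact hzvZ j a ha
      set zeta : (Fin p → (R ⧸ A)) →ₗ[Rᵐᵒᵖ] ↥Z :=
        ∑ j : Fin p, (A.liftQ (comp0 j) (hcompker j)).comp (LinearMap.proj j) with hzetadef
      have hzsurj : Function.Surjective zeta := by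
        have hall : ∀ z, z ∈ Z → ∃ v, (zeta v).1 = z := by
          intro z hz
          have hz' : z ∈ span Rᵐᵒᵖ (Set.range zv) := by rw [hzv]; exact hz
          refine Submodule.span_induction (p := fun y _ => ∃ v, (zeta v).1 = y) ?_ ?_ ?_ ?_ hz'
          · rintro y ⟨j, rfl⟩
            refine ⟨Pi.single j (Submodule.Quotient.mk 1), ?_⟩
            rw [hzetadef]
            simp only [LinearMap.sum_apply, LinearMap.comp_apply, LinearMap.proj_apply]
            rw [Finset.sum_eq_single j
              (fun b _ hb => by rw [Pi.single_eq_of_ne hb, map_zero])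
              (fun h => absurd (Finset.mem_univ j) h)]
            rw [Pi.single_eq_same, Submodule.liftQ_apply]
            show zv j * 1 = zv j
            rw [mul_one]
          · exact ⟨0, by rw [map_zero]; rfl⟩
          · rintro y z' _ _ ⟨v1, hv1⟩ ⟨v2, hv2⟩
            exact ⟨v1 + v2, by rw [map_add]; exact congrArg₂ (· + ·) hv1 hv2⟩
          · rintro c y _ ⟨v, hv⟩
            refine ⟨c • v, ?_⟩
            rw [map_smul]
            show c • ((zeta v).1) = c • y
            rw [hv]
        intro zz
        obtain ⟨v, hv⟩ := hall zz.1 zz.2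
        exact ⟨v, Subtype.ext hv⟩
      have hbetle : rKdim R ≤ SDim Rᵐᵒᵖ (R ⧸ A) := by
        calc rKdim R = SDim Rᵐᵒᵖ ↥Z := by rw [← hZdim, rIdealDim_eq_sdim]
          _ ≤ SDim Rᵐᵒᵖ (Fin p → (R ⧸ A)) := sdim_le_of_surjective zeta hzsurj
          _ ≤ SDim Rᵐᵒᵖ (R ⧸ A) := sdim_pi_le p _
      exact absurd (lt_of_le_of_lt hbetle hsmallQA) (lt_irrefl _)
  -- torsion-freeness
  have hfree : ∀ P : Submodule Rᵐᵒᵖ (R ⧸ Br), SDim Rᵐᵒᵖ ↥P < rKdim R → P = ⊥ := by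
    intro P h
    have hle := habsorb P (Or.inr h)
    rw [hTbbot] at hle
    exact le_bot_iff.mp hle
  have hQr_ge : rKdim R ≤ SDim Rᵐᵒᵖ (R ⧸ Br) := by
    by_contra h
    push_neg at h
    have htop' : SDim Rᵐᵒᵖ ↥(⊤ : Submodule Rᵐᵒᵖ (R ⧸ Br)) < rKdim R := by
      rw [show SDim Rᵐᵒᵖ ↥(⊤ : Submodule Rᵐᵒᵖ (R ⧸ Br)) = SDim Rᵐᵒᵖ (R ⧸ Br) from
        sdim_congr Submodule.topEquiv]
      exact h
    have hbot := hfree ⊤ htop'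
    have h1' : Br.mkQ 1 ∈ (⊥ : Submodule Rᵐᵒᵖ (R ⧸ Br)) := hbot ▸ mem_top
    have h10 : Br.mkQ 1 = 0 := (mem_bot _).mp h1'
    rw [mkQ_apply, Submodule.Quotient.mk_eq_zero] at h10
    exact hBproper h10
  have hQr : SDim Rᵐᵒᵖ (R ⧸ Br) = rKdim R := le_antisymm hQr_le hQr_ge
  have hrKdimQ : rKdimQ B = rKdim R := by
    calc rKdimQ B = dev (Submodule (B.ringCon.Quotient)ᵐᵒᵖ B.ringCon.Quotient) := rfl
      _ = dev (Submodule Rᵐᵒᵖ (R ⧸ Br)) := dev_eq_of_iso (quotRightIso B)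
      _ = rKdim R := hQr
  have hRKH : RightKH B.ringCon.Quotient := by
    intro J' hJ'
    set P := quotRightIso B J' with hPdef
    have hPne : P ≠ ⊥ := by
      intro h
      apply hJ'
      have h2' := congrArg (quotRightIso B).symm h
      rw [OrderIso.symm_apply_apply] at h2'
      rw [h2']
      exact OrderIso.map_bot _
    have hdim : rIdealDim B.ringCon.Quotient J' = SDim Rᵐᵒᵖ ↥P := by
      calc rIdealDim B.ringCon.Quotient J'
          = dev {Q' : Submodule Rᵐᵒᵖ (R ⧸ Br) // Q' ≤ P} :=
            dev_eq_of_iso ((quotRightIso B).restrictLe J')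
        _ = SDim Rᵐᵒᵖ ↥P := sdim_eq_ideal P
    have hge : rKdim R ≤ SDim Rᵐᵒᵖ ↥P := not_lt.mp (fun h => hPne (hfree P h))
    have hle : SDim Rᵐᵒᵖ ↥P ≤ rKdim R := by
      rw [← hQr]; exact sdim_sub_le P
    rw [hdim, le_antisymm hle hge]
    exact hrKdimQ.symm
  exact ⟨hRKH, hLKH, hrKdimQ, hlKdimQ⟩
end
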